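/- arXiv:1911.04076 — 9 statements merged into one kernel-verified Lean document; each statement's English description precedes it below -/
import Mathlib

section
/- For any point x in R^n and any set-valued mapping C from R^m to subsets of R^n, the lower limit as u' tends to u of dist(x, C(u')) equals dist(x, limsup_{u'→u} C(u')), where limsup denotes the Painlevé–Kuratowski outer limit. -/
open Filter Topology Pointwise RealInnerProductSpace

section Defs
variable {E F : Type*}
variable [NormedAddCommGroup E] [InnerProductSpace ℝ E]
variable [NormedAddCommGroup F] [InnerProductSpace ℝ F]

/-- Bouligand (contingent) tangent cone, via sequences. -/
def tangentCone' (S : Set E) (x : E) : Set E :=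
  {d | ∃ t : ℕ → ℝ, ∃ v : ℕ → E, (∀ k, 0 < t k) ∧ Tendsto t atTop (𝓝 0) ∧
    Tendsto v atTop (𝓝 d) ∧ ∀ k, x + t k • v k ∈ S}

/-- Outer second-order tangent set. -/
def tangentCone2 (S : Set E) (x d : E) : Set E :=
  {w | ∃ t : ℕ → ℝ, ∃ v : ℕ → E, (∀ k, 0 < t k) ∧ Tendsto t atTop (𝓝 0) ∧
    Tendsto v atTop (𝓝 w) ∧ ∀ k, x + t k • d + ((t k)^2 / 2) • v k ∈ S}

/-- Regular (Fréchet) normal cone. -/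
def frechetNormal (S : Set E) (x : E) : Set E :=
  {v | ∀ ε > (0:ℝ), ∃ δ > (0:ℝ), ∀ y ∈ S, ‖y - x‖ ≤ δ → ⟪v, y - x⟫ ≤ ε * ‖y - x‖}

/-- Limiting (Mordukhovich) normal cone. -/
def limNormal (S : Set E) (x : E) : Set E :=
  {v | ∃ xk vk : ℕ → E, (∀ k, xk k ∈ S) ∧ Tendsto xk atTop (𝓝 x) ∧
    Tendsto vk atTop (𝓝 v) ∧ ∀ k, vk k ∈ frechetNormal S (xk k)}

/-- Directional limiting normal cone. -/
def dirLimNormal (S : Set E) (x d : E) : Set E :=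
  {v | ∃ t : ℕ → ℝ, ∃ dk vk : ℕ → E, (∀ k, 0 < t k) ∧ Tendsto t atTop (𝓝 0) ∧
    Tendsto dk atTop (𝓝 d) ∧ Tendsto vk atTop (𝓝 v) ∧
    ∀ k, vk k ∈ frechetNormal S (x + t k • dk k)}

/-- Directional regular (Clarke) tangent cone. -/
def dirRegTangent (S : Set E) (x d : E) : Set E :=
  {v | ∀ t : ℕ → ℝ, ∀ dk : ℕ → E, (∀ k, 0 < t k) → Tendsto t atTop (𝓝 0) →
    Tendsto dk atTop (𝓝 d) → (∀ k, x + t k • dk k ∈ S) →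
    ∃ vk : ℕ → E, Tendsto vk atTop (𝓝 v) ∧ ∀ k, vk k ∈ tangentCone' S (x + t k • dk k)}

/-- Regular (Clarke) tangent cone, via sequences. -/
def clarkeTangent (S : Set E) (x : E) : Set E :=
  {v | ∀ t : ℕ → ℝ, ∀ xk : ℕ → E, (∀ k, 0 < t k) → Tendsto t atTop (𝓝 0) →
    (∀ k, xk k ∈ S) → Tendsto xk atTop (𝓝 x) →
    ∃ vk : ℕ → E, Tendsto vk atTop (𝓝 v) ∧ ∀ k, xk k + t k • vk k ∈ S}

/-- Polar cone. -/
def polarCone (K : Set E) : Set E := {v | ∀ w ∈ K, ⟪v, w⟫ ≤ 0}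

/-- Directional neighborhood V_{ρ,δ}(d). -/
def dirNbhd (ρ δ : ℝ) (d : E) : Set E :=
  {w | ‖w‖ < ρ ∧ ‖‖d‖ • w - ‖w‖ • d‖ ≤ δ * (‖w‖ * ‖d‖)}

/-- Metric subregularity of x ↦ g(x) - Λ at (x,0) in direction d. -/
def dirMetrSubreg (g : E → F) (Λ : Set F) (x d : E) : Prop :=
  ∃ κ > (0:ℝ), ∃ ρ > (0:ℝ), ∃ δ > (0:ℝ), ∀ y : E, y - x ∈ dirNbhd ρ δ d →
    Metric.infDist y {z | g z ∈ Λ} ≤ κ * Metric.infDist (g y) Λ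

/-- Metric subregularity in direction d with modulus κ. -/
def dirMetrSubregMod (g : E → F) (Λ : Set F) (x d : E) (κ : ℝ) : Prop :=
  ∀ κ' > κ, ∃ ρ > (0:ℝ), ∃ δ > (0:ℝ), ∀ y : E, y - x ∈ dirNbhd ρ δ d →
    Metric.infDist y {z | g z ∈ Λ} ≤ κ' * Metric.infDist (g y) Λ

/-- Support function, with values in EReal. -/
noncomputable def suppFn (S : Set E) (l : E) : EReal :=
  sSup ((fun u => ((⟪l, u⟫ : ℝ) : EReal)) '' S)

/-- Lower generalized support function. -/
noncomputable def sigmaHat (S : Set E) (l : E) : EReal :=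
  liminf (fun l' => sInf ((fun u => ((⟪l', u⟫ : ℝ) : EReal)) '' {u | l' ∈ limNormal S u})) (𝓝 l)

end Defs

/-- Painlevé–Kuratowski outer limit of a set-valued mapping. -/
def outerLimit {F E : Type*} [NormedAddCommGroup E] [NormedAddCommGroup F]
    (C : F → Set E) (u : F) : Set E :=
  {v | ∃ uk : ℕ → F, ∃ vk : ℕ → E, Tendsto uk atTop (𝓝 u) ∧ Tendsto vk atTop (𝓝 v) ∧
    ∀ k, vk k ∈ C (uk k)}

theorem stmt_0 {n m : ℕ} (x : EuclideanSpace ℝ (Fin n))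
    (C : EuclideanSpace ℝ (Fin m) → Set (EuclideanSpace ℝ (Fin n)))
    (u : EuclideanSpace ℝ (Fin m)) :
    liminf (fun u' => EMetric.infEdist x (C u')) (𝓝 u)
      = EMetric.infEdist x (outerLimit C u) := by
  
  apply le_antisymm
  · refine EMetric.le_infEdist.mpr ?_
    rintro v ⟨uk, vk, huk, hvk, hmem⟩
    have h1 : liminf (fun u' => EMetric.infEdist x (C u')) (𝓝 u)
        ≤ liminf (fun k => EMetric.infEdist x (C (uk k))) atTop :=
      Filter.liminf_le_liminf_of_le huk
    have h2 : liminf (fun k => EMetric.infEdist x (C (uk k))) atTop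
        ≤ liminf (fun k => edist x (vk k)) atTop := by
      exact Filter.liminf_le_liminf (Filter.Eventually.of_forall
        fun k => EMetric.infEdist_le_edist_of_mem (hmem k))
    have h3 : Tendsto (fun k => edist x (vk k)) atTop (𝓝 (edist x v)) :=
      ((continuous_const.edist continuous_id).tendsto v).comp hvk
    calc liminf (fun u' => EMetric.infEdist x (C u')) (𝓝 u)
        ≤ liminf (fun k => edist x (vk k)) atTop := h1.trans h2
      _ = edist x v := h3.liminf_eq
  · set L := liminf (fun u' => EMetric.infEdist x (C u')) (𝓝 u) with hLdef
    rcases eq_or_ne L ⊤ with hL | hL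
    · exact hL ▸ le_top
    have key : ∀ k : ℕ, ∃ u' v', dist u' u < 1 / (k + 1) ∧ v' ∈ C u' ∧
        edist x v' < L + ((k : ENNReal) + 1)⁻¹ := by
      intro k
      have hε : ((k : ENNReal) + 1)⁻¹ ≠ 0 := by
        simp [ENNReal.inv_ne_zero]
      have hlt : L < L + ((k : ENNReal) + 1)⁻¹ := ENNReal.lt_add_right hL hε
      have hfreq : ∃ᶠ u' in 𝓝 u,
          EMetric.infEdist x (C u') < L + ((k : ENNReal) + 1)⁻¹ :=
        Filter.frequently_lt_of_liminf_lt (by isBoundedDefault) hlt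
      have hev : ∀ᶠ u' in 𝓝 u, dist u' u < 1 / (k + 1) :=
        Metric.tendsto_nhds.mp tendsto_id (1 / (k + 1)) (by positivity)
      obtain ⟨u', h1, h2⟩ := (hfreq.and_eventually hev).exists
      obtain ⟨v', hv'⟩ := EMetric.infEdist_lt_iff.mp h1
      exact ⟨u', v', h2, hv'.1, hv'.2⟩
    choose uk vk hdist hmem hedist using key
    have hukto : Tendsto uk atTop (𝓝 u) := by
      rw [tendsto_iff_dist_tendsto_zero]
      apply squeeze_zero (fun k => dist_nonneg) (fun k => (hdist k).le)
      exact tendsto_one_div_add_atTop_nhds_zero_nat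
    have hεto : Tendsto (fun k : ℕ => ((k : ENNReal) + 1)⁻¹) atTop (𝓝 0) := by
      have h := ENNReal.tendsto_inv_nat_nhds_zero.comp (tendsto_add_atTop_nat 1)
      convert h using 2 with k
      simp [Function.comp]
    -- boundedness of vk
    have hbound : ∀ k, vk k ∈ Metric.closedBall x (L + 1).toReal := by
      intro k
      have h1 : edist x (vk k) ≤ L + 1 := by
        refine (hedist k).le.trans (add_le_add_right ?_ L)
        exact ENNReal.inv_le_one.mpr le_add_self
      have hne : L + 1 ≠ ⊤ := ENNReal.add_ne_top.2 ⟨hL, ENNReal.one_ne_top⟩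
      rw [Metric.mem_closedBall, dist_comm, dist_edist]
      exact ENNReal.toReal_mono hne h1
    obtain ⟨v, -, φ, hφ, hvto⟩ :=
      (isCompact_closedBall x (L + 1).toReal).tendsto_subseq hbound
    have hvmem : v ∈ outerLimit C u :=
      ⟨uk ∘ φ, vk ∘ φ, hukto.comp hφ.tendsto_atTop, hvto, fun k => hmem (φ k)⟩
    refine (EMetric.infEdist_le_edist_of_mem hvmem).trans ?_
    have h3 : Tendsto (fun j => edist x (vk (φ j))) atTop (𝓝 (edist x v)) :=
      ((continuous_const.edist continuous_id).tendsto v).comp hvto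
    have h4 : Tendsto (fun j => L + ((φ j : ENNReal) + 1)⁻¹) atTop (𝓝 L) := by
      have := hεto.comp hφ.tendsto_atTop
      simpa using (tendsto_const_nhds.add this : Tendsto _ atTop (𝓝 (L + 0)))
    exact le_of_tendsto_of_tendsto' h3 h4 fun j => (hedist (φ j)).le
end

section
/- For a closed set S ⊆ R^n, every x ∈ S, and every d ∈ T_S(x): (i) T_{T_S(x)}(d) + T̂_S(x;d) = T_{T_S(x)}(d), and (ii) T_S²(x;d) + T̂_S(x;d) = T_S²(x;d), where T̂_S(x;d) is the directional regular tangent cone. -/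
open Filter Topology Pointwise RealInnerProductSpace

section Aux
variable {E : Type*} [NormedAddCommGroup E] [InnerProductSpace ℝ E]
open Metric

lemma zero_mem_tangentCone' {S : Set E} {y : E} (hy : y ∈ S) : (0 : E) ∈ tangentCone' S y :=
  ⟨fun k => 1 / (k + 1), fun _ => 0, fun k => by positivity,
    tendsto_one_div_add_atTop_nhds_zero_nat, tendsto_const_nhds, fun k => by simpa using hy⟩

lemma zero_mem_dirRegTangent {S : Set E} {x d : E} : (0 : E) ∈ dirRegTangent S x d := by
  intro t dk _ _ _ hmem
  exact ⟨fun _ => 0, tendsto_const_nhds, fun k => zero_mem_tangentCone' (hmem k)⟩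

/-- Uniform version of directional regular tangency. -/
lemma dirRegTangent_uniform {S : Set E} {x d v : E} (hv : v ∈ dirRegTangent S x d) {ε : ℝ} (hε : 0 < ε) :
    ∃ δ > (0:ℝ), ∃ ρ > (0:ℝ), ∀ t : ℝ, 0 < t → t < δ → ∀ d' : E, ‖d' - d‖ < ρ →
      x + t • d' ∈ S → ∃ v', ‖v' - v‖ < ε ∧ v' ∈ tangentCone' S (x + t • d') := by
  by_contra h
  push_neg at h
  have h' : ∀ m : ℕ, ∃ t : ℝ, 0 < t ∧ t < 1/(m+1) ∧ ∃ d' : E, ‖d' - d‖ < 1/(m+1) ∧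
      x + t • d' ∈ S ∧ ∀ v', ‖v' - v‖ < ε → v' ∉ tangentCone' S (x + t • d') := by
    intro m
    obtain ⟨t, ht, htδ, d', hd', hmem, hbad⟩ := h (1/(m+1)) (by positivity) (1/(m+1)) (by positivity)
    exact ⟨t, ht, htδ, d', hd', hmem, fun v' h1 h2 => (hbad v' h1 h2).elim⟩
  choose t ht htδ d' hd' hmem hbad using h'
  have ht0 : Tendsto t atTop (𝓝 0) := by
    refine squeeze_zero (fun m => (ht m).le) (fun m => (htδ m).le) ?_
    exact_mod_cast tendsto_one_div_add_atTop_nhds_zero_nat (𝕜 := ℝ)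
  have hd0 : Tendsto d' atTop (𝓝 d) := by
    rw [tendsto_iff_norm_sub_tendsto_zero]
    refine squeeze_zero (fun m => norm_nonneg _) (fun m => (hd' m).le) ?_
    exact_mod_cast tendsto_one_div_add_atTop_nhds_zero_nat (𝕜 := ℝ)
  obtain ⟨vk, hvk, hvkmem⟩ := hv t d' ht ht0 hd0 hmem
  have : ∀ᶠ m in atTop, ‖vk m - v‖ < ε := by
    filter_upwards [hvk.eventually (Metric.ball_mem_nhds v hε)] with m hm
    simpa [dist_eq_norm] using hm
  obtain ⟨m, hm⟩ := this.exists
  exact hbad m (vk m) hm (hvkmem m)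

end Aux

section Chain
open Metric
variable {E : Type*} [NormedAddCommGroup E] [InnerProductSpace ℝ E] [ProperSpace E]

/-- Chaining lemma: from a point of `S` in direction `d'` near `d`, one can move
a length `L` comparable to `t` in direction `v` staying `ε L`-close to `S`. -/
lemma dirRegTangent_chain {S : Set E} (hS : IsClosed S) {x d v : E} (hv : v ∈ dirRegTangent S x d)
    {ε : ℝ} (hε : 0 < ε) :
    ∃ δ > (0:ℝ), ∃ ρ > (0:ℝ), ∀ t : ℝ, 0 < t → t < δ → ∀ d' : E, ‖d' - d‖ < ρ →
      x + t • d' ∈ S → ∀ L : ℝ, 0 ≤ L → L ≤ ρ * t →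
        infDist (x + t • d' + L • v) S ≤ ε * L := by
  obtain ⟨δ, hδ, ρ₀, hρ₀, H⟩ := dirRegTangent_uniform hv (half_pos hε)
  set ρ : ℝ := min (ρ₀/2) (ρ₀/(2*(‖v‖+ε+1))) with hρdef
  have hρpos : 0 < ρ := by positivity
  refine ⟨δ, hδ, ρ, hρpos, ?_⟩
  intro t ht htδ d' hd' hmem L hL hLρ
  set T : Set ℝ := Set.Icc 0 L ∩ {s | infDist (x + t • d' + s • v) S ≤ ε * s} with hT
  have hTclosed : IsClosed T := by
    refine (isClosed_Icc).inter (isClosed_le ?_ ?_)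
    · exact (continuous_infDist_pt S).comp (by fun_prop)
    · fun_prop
  have hT0 : (0:ℝ) ∈ T := by
    refine ⟨⟨le_refl 0, hL⟩, ?_⟩
    show infDist (x + t • d' + (0:ℝ) • v) S ≤ ε * 0
    rw [zero_smul, add_zero, mul_zero, infDist_zero_of_mem hmem]
  have hTbdd : BddAbove T := BddAbove.mono Set.inter_subset_left bddAbove_Icc
  have hsmem : sSup T ∈ T := hTclosed.csSup_mem ⟨0, hT0⟩ hTbdd
  set s := sSup T with hsdef
  obtain ⟨⟨hs0, hsL⟩, hsdist⟩ := hsmem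
  -- it suffices to show s = L
  suffices hsl : s = L by rw [← hsl]; exact hsdist
  by_contra hne
  have hslt : s < L := lt_of_le_of_ne hsL hne
  -- take a nearest point z ∈ S to x + t•d' + s•v
  obtain ⟨z, hzS, hzd⟩ := hS.exists_infDist_eq_dist ⟨_, hmem⟩ (x + t • d' + s • v)
  have hzdist : ‖x + t • d' + s • v - z‖ ≤ ε * s := by
    rw [← dist_eq_norm, ← hzd]; exact hsdist
  have htne : t ≠ 0 := ne_of_gt ht
  -- write z = x + t • d''
  set d'' : E := t⁻¹ • (z - x) with hd''def
  have hz : z = x + t • d'' := by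
    rw [hd''def, smul_smul, mul_inv_cancel₀ htne, one_smul]; abel
  have h3 : ‖z - (x + t • d')‖ ≤ s * (‖v‖ + ε) := by
    have : z - (x + t • d') = -(x + t • d' + s • v - z) + s • v := by abel
    calc ‖z - (x + t • d')‖ = ‖-(x + t • d' + s • v - z) + s • v‖ := by rw [this]
      _ ≤ ‖x + t • d' + s • v - z‖ + ‖s • v‖ := by
          refine le_trans (norm_add_le _ _) ?_; rw [norm_neg]
      _ ≤ ε * s + s * ‖v‖ := by
          have := norm_smul_of_nonneg hs0 v
          rw [this]; linarith [hzdist]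
      _ = s * (‖v‖ + ε) := by ring
  have h1 : ‖d'' - d'‖ ≤ ρ * (‖v‖ + ε) := by
    have key : t * ‖d'' - d'‖ ≤ t * (ρ * (‖v‖ + ε)) := by
      have heq : t • (d'' - d') = z - (x + t • d') := by rw [smul_sub, hz]; abel
      have h2 : t * ‖d'' - d'‖ = ‖z - (x + t • d')‖ := by
        rw [← norm_smul_of_nonneg ht.le, heq]
      rw [h2]
      calc ‖z - (x + t • d')‖ ≤ s * (‖v‖ + ε) := h3
        _ ≤ (ρ * t) * (‖v‖ + ε) := by
            refine mul_le_mul_of_nonneg_right (le_trans hsL hLρ) ?_; positivity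
        _ = t * (ρ * (‖v‖ + ε)) := by ring
    exact le_of_mul_le_mul_left key ht
  have hρhalf : ρ * (‖v‖ + ε) ≤ ρ₀ / 2 := by
    have h4 : ρ ≤ ρ₀/(2*(‖v‖+ε+1)) := min_le_right _ _
    have h5 : (0:ℝ) < ‖v‖ + ε + 1 := by positivity
    calc ρ * (‖v‖ + ε) ≤ ρ₀/(2*(‖v‖+ε+1)) * (‖v‖ + ε + 1) := by
          refine mul_le_mul h4 (by linarith) (by positivity) (by positivity)
      _ = ρ₀ / 2 := by field_simp
  have hd''d : ‖d'' - d‖ < ρ₀ := by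
    have hρle : ρ ≤ ρ₀/2 := min_le_left _ _
    calc ‖d'' - d‖ ≤ ‖d'' - d'‖ + ‖d' - d‖ := norm_sub_le_norm_sub_add_norm_sub _ _ _
      _ < ρ₀/2 + ρ := by
          have := lt_of_lt_of_le hd' (le_refl ρ)
          linarith [le_trans h1 hρhalf]
      _ ≤ ρ₀ := by linarith
  obtain ⟨v', hv'ε, hv'mem⟩ := H t ht htδ d'' hd''d (hz ▸ hzS)
  obtain ⟨τ, u, hτpos, hτ0, hu, humem⟩ := hv'mem
  have e1 : ∀ᶠ j in atTop, τ j < L - s := hτ0.eventually (eventually_lt_nhds (by linarith))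
  have e2 : ∀ᶠ j in atTop, ‖u j - v'‖ < ε/2 := by
    filter_upwards [hu.eventually (Metric.ball_mem_nhds v' (half_pos hε))] with j hj
    simpa [dist_eq_norm] using hj
  obtain ⟨j, hj1, hj2⟩ := (e1.and e2).exists
  -- s + τ j ∈ T, contradicting that s is the sup
  have hmem' : s + τ j ∈ T := by
    refine ⟨⟨by linarith [(hτpos j).le], by linarith⟩, ?_⟩
    show infDist (x + t • d' + (s + τ j) • v) S ≤ ε * (s + τ j)
    have hinS : (x + t • d'') + τ j • u j ∈ S := humem j
    have hdecomp : x + t • d' + (s + τ j) • v - ((x + t • d'') + τ j • u j)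
        = (x + t • d' + s • v - z) + τ j • (v - u j) := by
      rw [hz, add_smul, smul_sub]; abel
    calc infDist (x + t • d' + (s + τ j) • v) S
        ≤ dist (x + t • d' + (s + τ j) • v) ((x + t • d'') + τ j • u j) :=
          infDist_le_dist_of_mem hinS
      _ = ‖(x + t • d' + s • v - z) + τ j • (v - u j)‖ := by rw [dist_eq_norm, hdecomp]
      _ ≤ ε * s + τ j * ‖v - u j‖ := by
          refine le_trans (norm_add_le _ _) ?_
          rw [norm_smul_of_nonneg (hτpos j).le]
          exact add_le_add hzdist (le_refl _)
      _ ≤ ε * s + τ j * ε := by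
          refine add_le_add (le_refl _) (mul_le_mul_of_nonneg_left ?_ (hτpos j).le)
          have h6 : ‖v - u j‖ ≤ ‖v - v'‖ + ‖v' - u j‖ := norm_sub_le_norm_sub_add_norm_sub _ _ _
          have h7 : ‖v - v'‖ < ε/2 := by rwa [norm_sub_rev]
          have h8 : ‖v' - u j‖ < ε/2 := by rwa [norm_sub_rev]
          linarith
      _ = ε * (s + τ j) := by ring
  have : s + τ j ≤ s := le_csSup hTbdd hmem'
  linarith [hτpos j]

end Chain

section Compact
open Metric
variable {E : Type*} [NormedAddCommGroup E] [InnerProductSpace ℝ E] [ProperSpace E]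

lemma infDist_tc_le {S : Set E} {x : E} (t : ℕ → ℝ) (c : ℕ → E) (ht : ∀ k, 0 < t k)
    (ht0 : Tendsto t atTop (𝓝 0)) (hc : ∀ k, x + t k • c k ∈ S) (q : E) (r : ℝ)
    (hb : ∀ k, ‖c k - q‖ ≤ r + t k) : infDist q (tangentCone' S x) ≤ r := by
  obtain ⟨C, hC⟩ := ht0.bddAbove_range
  have hC' : ∀ k, t k ≤ C := fun k => hC (Set.mem_range_self k)
  have hcball : ∀ k, c k ∈ Metric.closedBall q (r + C) := by
    intro k
    rw [Metric.mem_closedBall, dist_eq_norm]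
    exact le_trans (hb k) (by linarith [hC' k])
  obtain ⟨a, _, φ, hφ, hca⟩ := (isCompact_closedBall q (r + C)).tendsto_subseq hcball
  have hamem : a ∈ tangentCone' S x :=
    ⟨t ∘ φ, c ∘ φ, fun k => ht _, ht0.comp hφ.tendsto_atTop, hca, fun k => hc _⟩
  have hnorm : Tendsto (fun k => ‖c (φ k) - q‖) atTop (𝓝 ‖a - q‖) :=
    ((hca.sub tendsto_const_nhds).norm)
  have hlim : Tendsto (fun k => r + t (φ k)) atTop (𝓝 r) := by
    have := (ht0.comp hφ.tendsto_atTop).const_add r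
    simpa using this
  have haq : ‖a - q‖ ≤ r := le_of_tendsto_of_tendsto' hnorm hlim (fun k => hb (φ k))
  calc infDist q (tangentCone' S x) ≤ dist q a := infDist_le_dist_of_mem hamem
    _ = ‖a - q‖ := by rw [dist_eq_norm, norm_sub_rev]
    _ ≤ r := haq

end Compact

section Main
open Metric
variable {E : Type*} [NormedAddCommGroup E] [InnerProductSpace ℝ E] [ProperSpace E]

lemma add_mem_tangentCone2 {S : Set E} (hS : IsClosed S) {x d w v : E} (hx : x ∈ S)
    (hw : w ∈ tangentCone2 S x d) (hv : v ∈ dirRegTangent S x d) : w + v ∈ tangentCone2 S x d := by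
  obtain ⟨t, ws, htpos, ht0, hws, hmem⟩ := hw
  set p : ℕ → E := fun k => x + t k • d + ((t k)^2/2) • (ws k + v) with hp
  have hzex : ∀ k, ∃ z ∈ S, dist (p k) z < infDist (p k) S + (t k)^3 := fun k =>
    (infDist_lt_iff ⟨x, hx⟩).1 (lt_add_of_pos_right _ (pow_pos (htpos k) 3))
  choose z hzS hzd using hzex
  have htne : ∀ k, (t k) ≠ 0 := fun k => ne_of_gt (htpos k)
  set vk : ℕ → E := fun k => ((2:ℝ)/(t k)^2) • (z k - x - t k • d) with hvk
  have hsmul : ∀ k (u : E), ((t k)^2/2) • (((2:ℝ)/(t k)^2) • u) = u := by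
    intro k u
    rw [smul_smul]
    have : (t k)^2/2 * (2/(t k)^2) = 1 := by field_simp [htne k]
    rw [this, one_smul]
  have hsmul' : ∀ k (u : E), ((2:ℝ)/(t k)^2) • (((t k)^2/2) • u) = u := by
    intro k u
    rw [smul_smul]
    have : (2:ℝ)/(t k)^2 * ((t k)^2/2) = 1 := by field_simp [htne k]
    rw [this, one_smul]
  have hmem2 : ∀ k, x + t k • d + ((t k)^2/2) • vk k ∈ S := by
    intro k
    have : x + t k • d + ((t k)^2/2) • vk k = z k := by
      show x + t k • d + ((t k)^2/2) • (((2:ℝ)/(t k)^2) • (z k - x - t k • d)) = z k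
      rw [hsmul]; abel
    rw [this]; exact hzS k
  have hdiff : ∀ k, vk k - (ws k + v) = ((2:ℝ)/(t k)^2) • (z k - p k) := by
    intro k
    have hzp : z k - p k = (z k - x - t k • d) - ((t k)^2/2) • (ws k + v) := by
      rw [hp]; dsimp only; abel
    rw [hzp, smul_sub, hsmul']
  -- the error tends to 0
  have herr : Tendsto (fun k => vk k - (ws k + v)) atTop (𝓝 0) := by
    rw [NormedAddCommGroup.tendsto_nhds_zero]
    intro ε hε
    obtain ⟨δ, hδ, ρ, hρ, Hc⟩ := dirRegTangent_chain hS hv (show (0:ℝ) < ε/4 by linarith)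
    have hd' : Tendsto (fun k => d + (t k / 2) • ws k) atTop (𝓝 d) := by
      have h1 : Tendsto (fun k => (t k / 2) • ws k) atTop (𝓝 0) := by
        have := Tendsto.smul (ht0.div_const 2) hws
        simpa using this
      simpa using tendsto_const_nhds.add h1
    have e1 : ∀ᶠ k in atTop, t k < δ := ht0.eventually (eventually_lt_nhds hδ)
    have e2 : ∀ᶠ k in atTop, ‖(d + (t k / 2) • ws k) - d‖ < ρ := by
      filter_upwards [hd'.eventually (Metric.ball_mem_nhds d hρ)] with k hk
      simpa [dist_eq_norm] using hk
    have e3 : ∀ᶠ k in atTop, t k < 2 * ρ := ht0.eventually (eventually_lt_nhds (by linarith))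
    have e4 : ∀ᶠ k in atTop, t k < ε / 8 := ht0.eventually (eventually_lt_nhds (by linarith))
    filter_upwards [e1, e2, e3, e4] with k h1 h2 h3 h4
    have hbase : x + t k • (d + (t k / 2) • ws k) ∈ S := by
      have : x + t k • (d + (t k / 2) • ws k) = x + t k • d + ((t k)^2/2) • ws k := by
        rw [smul_add, smul_smul, add_assoc]
        congr 2
        rw [show t k * (t k / 2) = (t k)^2/2 by ring]
      rw [this]; exact hmem k
    have hchain := Hc (t k) (htpos k) h1 _ h2 hbase ((t k)^2/2)
      (by positivity : (0:ℝ) ≤ (t k)^2/2) (by nlinarith [htpos k])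
    have hpeq : x + t k • (d + (t k / 2) • ws k) + ((t k)^2/2) • v = p k := by
      rw [hp]; dsimp only
      rw [smul_add (t k), smul_smul, smul_add ((t k)^2/2)]
      rw [show t k * (t k / 2) = (t k)^2/2 by ring]
      abel
    rw [hpeq] at hchain
    have hbound : ‖vk k - (ws k + v)‖ ≤ (2/(t k)^2) * (infDist (p k) S + (t k)^3) := by
      rw [hdiff k, norm_smul]
      have h5 : |((2:ℝ)/(t k)^2)| = 2/(t k)^2 := abs_of_pos (div_pos two_pos (pow_pos (htpos k) 2))
      rw [Real.norm_eq_abs, h5]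
      refine mul_le_mul_of_nonneg_left ?_ (by positivity)
      rw [← norm_sub_rev, ← dist_eq_norm]
      exact (hzd k).le
    have harith : (2/(t k)^2) * ((ε/4) * ((t k)^2/2) + (t k)^3) = ε/4 + 2 * t k := by
      field_simp [htne k]
    calc ‖vk k - (ws k + v)‖ ≤ (2/(t k)^2) * (infDist (p k) S + (t k)^3) := hbound
      _ ≤ (2/(t k)^2) * ((ε/4) * ((t k)^2/2) + (t k)^3) := by
          refine mul_le_mul_of_nonneg_left (by linarith [hchain]) (by positivity)
      _ = ε/4 + 2 * t k := harith
      _ < ε := by linarith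
  have hvk2 : Tendsto vk atTop (𝓝 (w + v)) := by
    have h1 : Tendsto (fun k => ws k + v) atTop (𝓝 (w + v)) := hws.add_const v
    have := herr.add h1
    simpa using this
  exact ⟨t, vk, htpos, ht0, hvk2, hmem2⟩

end Main

section Main2
open Metric
variable {E : Type*} [NormedAddCommGroup E] [InnerProductSpace ℝ E] [ProperSpace E]

lemma add_mem_tctc {S : Set E} (hS : IsClosed S) {x d a v : E} (hx : x ∈ S)
    (hd : d ∈ tangentCone' S x) (ha : a ∈ tangentCone' (tangentCone' S x) d) (hv : v ∈ dirRegTangent S x d) :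
    a + v ∈ tangentCone' (tangentCone' S x) d := by
  obtain ⟨sm, am, hspos, hs0, ham, hmemK⟩ := ha
  set K := tangentCone' S x with hK
  set q : ℕ → E := fun m => d + sm m • (am m + v) with hq
  have claim : ∀ ε : ℝ, 0 < ε → ∀ᶠ m in atTop, infDist (q m) K ≤ ε * sm m := by
    intro ε hε
    obtain ⟨δ, hδ, ρ, hρ, Hc⟩ := dirRegTangent_chain hS hv (half_pos hε)
    have eA : ∀ᶠ m in atTop, sm m * ‖am m‖ < ρ/2 := by
      have h0 : Tendsto (fun m => sm m * ‖am m‖) atTop (𝓝 0) := by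
        simpa using hs0.mul ham.norm
      exact h0.eventually (eventually_lt_nhds (by linarith))
    have eB : ∀ᶠ m in atTop, sm m ≤ ρ := (hs0.eventually (eventually_lt_nhds hρ)).mono
      (fun m h => h.le)
    filter_upwards [eA, eB] with m hA hB
    obtain ⟨τ, u, hτpos, hτ0, hu, humem⟩ := hmemK m
    set b : E := d + sm m • am m with hb
    set ρ' : ℝ := min (ρ/2) ((ε/4) * sm m) with hρ'def
    have hρ' : 0 < ρ' := lt_min (by linarith) (mul_pos (by linarith) (hspos m))
    have eC : ∀ᶠ j in atTop, τ j < δ := hτ0.eventually (eventually_lt_nhds hδ)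
    have eD : ∀ᶠ j in atTop, ‖u j - b‖ < ρ' := by
      filter_upwards [hu.eventually (Metric.ball_mem_nhds b hρ')] with j hj
      simpa [dist_eq_norm] using hj
    obtain ⟨N, hN⟩ := eventually_atTop.1 (eC.and eD)
    have hτne : ∀ k : ℕ, τ (k+N) ≠ 0 := fun k => ne_of_gt (hτpos _)
    have hzex : ∀ k : ℕ, ∃ zz ∈ S,
        dist (x + τ (k+N) • u (k+N) + (sm m * τ (k+N)) • v) zz
          < (ε/2) * (sm m * τ (k+N)) + (τ (k+N))^2 := by
      intro k
      obtain ⟨hj1, hj2⟩ := hN (k+N) (Nat.le_add_left N k)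
      have hub : ‖u (k+N) - d‖ < ρ := by
        have h1 : ‖u (k+N) - d‖ ≤ ‖u (k+N) - b‖ + ‖b - d‖ :=
          norm_sub_le_norm_sub_add_norm_sub _ _ _
        have h2 : ‖b - d‖ = sm m * ‖am m‖ := by
          rw [hb]
          rw [show d + sm m • am m - d = sm m • am m by abel]
          exact norm_smul_of_nonneg (hspos m).le _
        have h3 : ‖u (k+N) - b‖ < ρ/2 := lt_of_lt_of_le hj2 (min_le_left _ _)
        rw [h2] at h1
        linarith
      have hch := Hc (τ (k+N)) (hτpos _) hj1 (u (k+N)) hub (humem (k+N))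
        (sm m * τ (k+N)) ((mul_pos (hspos m) (hτpos _)).le)
        (mul_le_mul_of_nonneg_right hB (hτpos _).le)
      refine (infDist_lt_iff ⟨x, hx⟩).1 (lt_of_le_of_lt hch ?_)
      nlinarith [hτpos (k+N), sq_nonneg (τ (k+N))]
    choose z hzS hzd using hzex
    set c : ℕ → E := fun k => (τ (k+N))⁻¹ • (z k - x) with hc
    have hcmem : ∀ k, x + τ (k+N) • c k ∈ S := by
      intro k
      have : x + τ (k+N) • c k = z k := by
        rw [hc]; dsimp only
        rw [smul_smul, mul_inv_cancel₀ (hτne k), one_smul]; abel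
      rw [this]; exact hzS k
    have hcb : ∀ k, ‖c k - q m‖ ≤ (3*ε/4) * sm m + τ (k+N) := by
      intro k
      obtain ⟨hj1, hj2⟩ := hN (k+N) (Nat.le_add_left N k)
      set τ' : ℝ := τ (k+N) with hτ'
      set pt : E := x + τ' • u (k+N) + (sm m * τ') • v with hpt
      have hkey : z k - x - τ' • q m = (z k - pt) + τ' • (u (k+N) - b) := by
        rw [hpt, hq, hb]; dsimp only
        module
      have hnorm1 : ‖z k - pt‖ ≤ (ε/2) * (sm m * τ') + τ'^2 := by
        rw [← norm_sub_rev, ← dist_eq_norm]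
        exact (hzd k).le
      have hnorm2 : ‖τ' • (u (k+N) - b)‖ ≤ τ' * ((ε/4) * sm m) := by
        rw [norm_smul_of_nonneg (hτpos _).le]
        refine mul_le_mul_of_nonneg_left ?_ (hτpos _).le
        exact (lt_of_lt_of_le hj2 (min_le_right _ _)).le
      have htot : ‖z k - x - τ' • q m‖ ≤ τ' * ((3*ε/4) * sm m + τ') := by
        calc ‖z k - x - τ' • q m‖ = ‖(z k - pt) + τ' • (u (k+N) - b)‖ := by rw [hkey]
          _ ≤ ‖z k - pt‖ + ‖τ' • (u (k+N) - b)‖ := norm_add_le _ _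
          _ ≤ ((ε/2) * (sm m * τ') + τ'^2) + τ' * ((ε/4) * sm m) := add_le_add hnorm1 hnorm2
          _ = τ' * ((3*ε/4) * sm m + τ') := by ring
      have hceq : ‖c k - q m‖ = τ'⁻¹ * ‖z k - x - τ' • q m‖ := by
        rw [hc]; dsimp only
        rw [show (τ (k+N))⁻¹ • (z k - x) - q m = (τ (k+N))⁻¹ • (z k - x - τ (k+N) • q m) by
          match_scalars <;> field_simp [hτne k] <;> ring]
        rw [norm_smul_of_nonneg (inv_nonneg.2 (hτpos _).le)]
      rw [hceq]
      calc τ'⁻¹ * ‖z k - x - τ' • q m‖ ≤ τ'⁻¹ * (τ' * ((3*ε/4) * sm m + τ')) :=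
            mul_le_mul_of_nonneg_left htot (inv_nonneg.2 (hτpos _).le)
        _ = (3*ε/4) * sm m + τ' := by
            rw [← mul_assoc, inv_mul_cancel₀ (hτne k), one_mul]
    have hres := infDist_tc_le (fun k => τ (k+N)) c (fun k => hτpos _)
      (hτ0.comp (tendsto_add_atTop_nat N)) hcmem (q m) ((3*ε/4) * sm m) hcb
    refine le_trans hres ?_
    nlinarith [hspos m]
  -- choose nearby points of K
  have hpex : ∀ m, ∃ p ∈ K, dist (q m) p < infDist (q m) K + (sm m)^2 := fun m =>
    (infDist_lt_iff ⟨d, hd⟩).1 (lt_add_of_pos_right _ (pow_pos (hspos m) 2))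
  choose pm hpK hpd using hpex
  set bm : ℕ → E := fun m => (sm m)⁻¹ • (pm m - d) with hbm
  have hsne : ∀ m, sm m ≠ 0 := fun m => ne_of_gt (hspos m)
  have hmem2 : ∀ m, d + sm m • bm m ∈ K := by
    intro m
    have : d + sm m • bm m = pm m := by
      rw [hbm]; dsimp only
      rw [smul_smul, mul_inv_cancel₀ (hsne m), one_smul]; abel
    rw [this]; exact hpK m
  have herr : Tendsto (fun m => bm m - (am m + v)) atTop (𝓝 0) := by
    rw [NormedAddCommGroup.tendsto_nhds_zero]
    intro ε hε
    have e1 := claim (ε/3) (by linarith)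
    have e2 : ∀ᶠ m in atTop, sm m < ε/3 := hs0.eventually (eventually_lt_nhds (by linarith))
    filter_upwards [e1, e2] with m h1 h2
    have hdiff : bm m - (am m + v) = (sm m)⁻¹ • (pm m - q m) := by
      rw [hbm, hq]; dsimp only
      match_scalars <;> field_simp [hsne m]
    have hn : ‖bm m - (am m + v)‖ ≤ (sm m)⁻¹ * ((ε/3) * sm m + (sm m)^2) := by
      rw [hdiff, norm_smul_of_nonneg (inv_nonneg.2 (hspos m).le)]
      refine mul_le_mul_of_nonneg_left ?_ (inv_nonneg.2 (hspos m).le)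
      rw [← dist_eq_norm]
      calc dist (pm m) (q m) = dist (q m) (pm m) := dist_comm _ _
        _ ≤ infDist (q m) K + (sm m)^2 := (hpd m).le
        _ ≤ (ε/3) * sm m + (sm m)^2 := by linarith
    have heq : (sm m)⁻¹ * ((ε/3) * sm m + (sm m)^2) = ε/3 + sm m := by
      field_simp [hsne m]
    rw [heq] at hn
    linarith
  have hbt : Tendsto bm atTop (𝓝 (a + v)) := by
    have h1 : Tendsto (fun m => am m + v) atTop (𝓝 (a + v)) := ham.add_const v
    have := herr.add h1
    simpa using this
  exact ⟨sm, bm, hspos, hs0, hbt, hmem2⟩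

end Main2


theorem stmt_2 {n : ℕ} (S : Set (EuclideanSpace ℝ (Fin n))) (hS : IsClosed S)
    (x : EuclideanSpace ℝ (Fin n)) (hx : x ∈ S)
    (d : EuclideanSpace ℝ (Fin n)) (hd : d ∈ tangentCone' S x) :
    tangentCone' (tangentCone' S x) d + dirRegTangent S x d = tangentCone' (tangentCone' S x) d ∧
    tangentCone2 S x d + dirRegTangent S x d = tangentCone2 S x d := by
  constructor
  · refine Set.Subset.antisymm ?_ ?_
    · rintro y hy
      rw [Set.mem_add] at hy
      obtain ⟨b, hb, c, hc, rfl⟩ := hy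
      exact add_mem_tctc hS hx hd hb hc
    · intro y hy
      exact Set.mem_add.2 ⟨y, hy, 0, zero_mem_dirRegTangent, add_zero y⟩
  · refine Set.Subset.antisymm ?_ ?_
    · rintro y hy
      rw [Set.mem_add] at hy
      obtain ⟨b, hb, c, hc, rfl⟩ := hy
      exact add_mem_tangentCone2 hS hx hb hc
    · intro y hy
      exact Set.mem_add.2 ⟨y, hy, 0, zero_mem_dirRegTangent, add_zero y⟩
end

section
/- Let φ: R^n → R^m be continuously differentiable, C ⊆ R^m closed, φ(x̄) ∈ C, and let d satisfy ∇φ(x̄)d ∈ T_C(φ(x̄)). If the mapping M(x) := φ(x) − C is metrically subregular at (x̄, 0) in direction d with modulus κ̄, then the linearized mapping w ↦ ∇φ(x̄)w − T_C(φ(x̄)) is metrically subregular at (d, 0) with modulus at most κ̄. -/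
open Filter Topology Pointwise RealInnerProductSpace

lemma le_of_forall_pos_le_add' {a b : ℝ} (h : ∀ ε > 0, a ≤ b + ε) : a ≤ b := by
  by_contra hab
  push_neg at hab
  have := h ((a - b) / 2) (by linarith)
  linarith

/-- difference quotient tendsto lemma -/
lemma diffQuot_tendsto {n m : ℕ} (φ : EuclideanSpace ℝ (Fin n) → EuclideanSpace ℝ (Fin m))
    (hφ : ContDiff ℝ 1 φ) (xb : EuclideanSpace ℝ (Fin n))
    (t : ℕ → ℝ) (htpos : ∀ k, 0 < t k) (ht0 : Tendsto t atTop (𝓝 0))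
    (z : ℕ → EuclideanSpace ℝ (Fin n)) (zl : EuclideanSpace ℝ (Fin n))
    (hz : Tendsto z atTop (𝓝 zl)) :
    Tendsto (fun k => (t k)⁻¹ • (φ (xb + t k • z k) - φ xb)) atTop
      (𝓝 (fderiv ℝ φ xb zl)) := by
  set A := fderiv ℝ φ xb with hA
  have hst : HasStrictFDerivAt φ A xb := hφ.contDiffAt.hasStrictFDerivAt one_ne_zero
  have hseq : Tendsto (fun k => ((xb + t k • z k, xb) : _ × _)) atTop (𝓝 (xb, xb)) := by
    apply Tendsto.prodMk_nhds _ tendsto_const_nhds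
    have : Tendsto (fun k => t k • z k) atTop (𝓝 ((0:ℝ) • zl)) := ht0.smul hz
    rw [zero_smul] at this
    simpa using (tendsto_const_nhds (x := xb)).add this
  have hlo := hst.isLittleO.comp_tendsto hseq
  -- goal decomposition
  have hD : Tendsto (fun k => (t k)⁻¹ • (φ (xb + t k • z k) - φ xb) - A (z k)) atTop (𝓝 0) := by
    rw [NormedAddCommGroup.tendsto_nhds_zero]
    intro ε hε
    have hMz : ∀ᶠ k in atTop, ‖z k‖ < ‖zl‖ + 1 := by
      have : Tendsto (fun k => ‖z k‖) atTop (𝓝 ‖zl‖) := hz.norm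
      exact this.eventually_lt_const (by linarith)
    have hc : (0:ℝ) < ε / (2 * (‖zl‖ + 1)) := by positivity
    have hev := (hlo.def hc).and hMz
    filter_upwards [hev] with k hk
    obtain ⟨hk1, hk2⟩ := hk
    have htk := htpos k
    have hne : t k ≠ 0 := ne_of_gt htk
    have heq : (t k)⁻¹ • (φ (xb + t k • z k) - φ xb) - A (z k)
        = (t k)⁻¹ • (φ (xb + t k • z k) - φ xb - A ((xb + t k • z k) - xb)) := by
      simp only [add_sub_cancel_left, map_smul, inv_smul_smul₀ hne, smul_sub]
    rw [heq, norm_smul]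
    simp only [Function.comp] at hk1
    have h1 : ‖φ (xb + t k • z k) - φ xb - A ((xb + t k • z k) - xb)‖
        ≤ ε / (2 * (‖zl‖ + 1)) * ‖(xb + t k • z k) - xb‖ := hk1
    have h2 : ‖(xb + t k • z k) - xb‖ = t k * ‖z k‖ := by
      simp [norm_smul, abs_of_pos htk]
    rw [h2] at h1
    calc ‖(t k)⁻¹‖ * ‖φ (xb + t k • z k) - φ xb - A ((xb + t k • z k) - xb)‖
        ≤ (t k)⁻¹ * (ε / (2 * (‖zl‖ + 1)) * (t k * ‖z k‖)) := by
          rw [norm_inv, Real.norm_eq_abs, abs_of_pos htk]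
          exact mul_le_mul_of_nonneg_left h1 (by positivity)
      _ = ε / (2 * (‖zl‖ + 1)) * ‖z k‖ := by field_simp
      _ < ε := by
          have hz0 : ‖z k‖ < ‖zl‖ + 1 := hk2
          have : ε / (2 * (‖zl‖ + 1)) * ‖z k‖ ≤ ε / (2 * (‖zl‖ + 1)) * (‖zl‖ + 1) := by
            exact mul_le_mul_of_nonneg_left hz0.le (by positivity)
          have h3 : ε / (2 * (‖zl‖ + 1)) * (‖zl‖ + 1) = ε / 2 := by field_simp
          linarith
  have hAz : Tendsto (fun k => A (z k)) atTop (𝓝 (A zl)) :=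
    (A.continuous.tendsto zl).comp hz
  have := hD.add hAz
  rw [zero_add] at this
  simpa using this


lemma coreBound {n m : ℕ} (φ : EuclideanSpace ℝ (Fin n) → EuclideanSpace ℝ (Fin m))
    (hφ : ContDiff ℝ 1 φ) (C : Set (EuclideanSpace ℝ (Fin m)))
    (xb : EuclideanSpace ℝ (Fin n)) (hx : φ xb ∈ C) (d : EuclideanSpace ℝ (Fin n))
    (κ' ρM δM : ℝ) (hκ' : 0 ≤ κ') (hρM : 0 < ρM) (hδM : 0 < δM)
    (hP : ∀ y : EuclideanSpace ℝ (Fin n), y - xb ∈ dirNbhd ρM δM d →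
      Metric.infDist y {z | φ z ∈ C} ≤ κ' * Metric.infDist (φ y) C)
    (w : EuclideanSpace ℝ (Fin n)) (hdir : ‖‖d‖ • w - ‖w‖ • d‖ ≤ δM * (‖w‖ * ‖d‖))
    (u : EuclideanSpace ℝ (Fin m)) (hu : u ∈ tangentCone' C (φ xb)) (ε₀ : ℝ) (hε₀ : 0 < ε₀) :
    Metric.infDist w {w' | fderiv ℝ φ xb w' ∈ tangentCone' C (φ xb)} ≤
      κ' * (‖fderiv ℝ φ xb w - u‖ + 2*ε₀) + ε₀ := by
  obtain ⟨t, v, htpos, ht0, hv, hmemC⟩ := hu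
  set A := fderiv ℝ φ xb with hA
  set Φ : Set (EuclideanSpace ℝ (Fin n)) := {z | φ z ∈ C} with hΦ
  set T := tangentCone' C (φ xb) with hT
  -- eventual facts
  have hq := diffQuot_tendsto φ hφ xb t htpos ht0 (fun _ => w) w tendsto_const_nhds
  have E1 : ∀ᶠ k in atTop, ‖(t k)⁻¹ • (φ (xb + t k • w) - φ xb) - A w‖ ≤ ε₀ := by
    filter_upwards [Metric.tendsto_nhds.mp hq ε₀ hε₀] with k hk
    rw [dist_eq_norm] at hk; exact hk.le
  have E2 : ∀ᶠ k in atTop, ‖v k - u‖ ≤ ε₀ := by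
    filter_upwards [Metric.tendsto_nhds.mp hv ε₀ hε₀] with k hk
    rw [dist_eq_norm] at hk; exact hk.le
  have E3 : ∀ᶠ k in atTop, t k * ‖w‖ < ρM := by
    have hpos : (0:ℝ) < ρM / (‖w‖ + 1) := by positivity
    filter_upwards [Metric.tendsto_nhds.mp ht0 _ hpos] with k hk
    rw [Real.dist_eq, sub_zero, abs_of_pos (htpos k)] at hk
    have h1 : t k * ‖w‖ ≤ t k * (‖w‖ + 1) := by
      have := (htpos k).le; nlinarith [norm_nonneg w]
    have h2 : t k * (‖w‖ + 1) < ρM :=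
      (lt_div_iff₀ (by positivity : (0:ℝ) < ‖w‖ + 1)).mp hk
    linarith
  obtain ⟨N, hN⟩ := eventually_atTop.mp ((E1.and E2).and E3)
  set tt : ℕ → ℝ := fun k => t (k + N) with htt
  set vv : ℕ → EuclideanSpace ℝ (Fin m) := fun k => v (k + N) with hvv
  have httpos : ∀ k, 0 < tt k := fun k => htpos _
  have htt0 : Tendsto tt atTop (𝓝 0) := ht0.comp (tendsto_add_atTop_nat N)
  have hNk : ∀ k : ℕ, (‖(tt k)⁻¹ • (φ (xb + tt k • w) - φ xb) - A w‖ ≤ ε₀ ∧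
      ‖vv k - u‖ ≤ ε₀) ∧ tt k * ‖w‖ < ρM := fun k => hN (k + N) (Nat.le_add_left N k)
  set y : ℕ → EuclideanSpace ℝ (Fin n) := fun k => xb + tt k • w with hy
  -- distance of φ (y k) to C
  have f1 : ∀ k, ‖φ (y k) - φ xb - tt k • A w‖ ≤ ε₀ * tt k := by
    intro k
    have hne : tt k ≠ 0 := (httpos k).ne'
    have : φ (y k) - φ xb - tt k • A w
        = tt k • ((tt k)⁻¹ • (φ (xb + tt k • w) - φ xb) - A w) := by
      rw [smul_sub, smul_inv_smul₀ hne]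
    rw [this, norm_smul, Real.norm_eq_abs, abs_of_pos (httpos k), mul_comm]
    exact mul_le_mul_of_nonneg_right ((hNk k).1.1) (httpos k).le
  have yC : ∀ k, Metric.infDist (φ (y k)) C ≤ tt k * (‖A w - u‖ + 2*ε₀) := by
    intro k
    have hmem : φ xb + tt k • vv k ∈ C := hmemC (k + N)
    refine (Metric.infDist_le_dist_of_mem hmem).trans ?_
    rw [dist_eq_norm]
    have heq : φ (y k) - (φ xb + tt k • vv k)
        = (φ (y k) - φ xb - tt k • A w) + tt k • (A w - vv k) := by
      rw [smul_sub]; abel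
    rw [heq]
    have h2 : ‖tt k • (A w - vv k)‖ ≤ tt k * (‖A w - u‖ + ε₀) := by
      rw [norm_smul, Real.norm_eq_abs, abs_of_pos (httpos k)]
      refine mul_le_mul_of_nonneg_left ?_ (httpos k).le
      calc ‖A w - vv k‖ ≤ ‖A w - u‖ + ‖u - vv k‖ := norm_sub_le_norm_sub_add_norm_sub _ _ _
        _ ≤ ‖A w - u‖ + ε₀ := by
            have := (hNk k).1.2; rw [norm_sub_rev] at this; linarith
    calc ‖(φ (y k) - φ xb - tt k • A w) + tt k • (A w - vv k)‖
        ≤ ‖φ (y k) - φ xb - tt k • A w‖ + ‖tt k • (A w - vv k)‖ := norm_add_le _ _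
      _ ≤ ε₀ * tt k + tt k * (‖A w - u‖ + ε₀) := add_le_add (f1 k) h2
      _ = tt k * (‖A w - u‖ + 2*ε₀) := by ring
  -- directional neighborhood membership
  have hdirk : ∀ k, y k - xb ∈ dirNbhd ρM δM d := by
    intro k
    have hyk : y k - xb = tt k • w := add_sub_cancel_left xb _
    rw [hyk]
    constructor
    · rw [norm_smul, Real.norm_eq_abs, abs_of_pos (httpos k)]
      exact (hNk k).2
    · have e1 : ‖d‖ • (tt k • w) = tt k • (‖d‖ • w) := smul_comm _ _ _
      have e2 : ‖tt k • w‖ • d = tt k • (‖w‖ • d) := by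
        rw [norm_smul, Real.norm_eq_abs, abs_of_pos (httpos k), mul_smul]
      rw [e1, e2, ← smul_sub]
      simp only [norm_smul, Real.norm_eq_abs, abs_of_pos (httpos k)]
      nlinarith [mul_le_mul_of_nonneg_left hdir (httpos k).le, norm_nonneg d,
        norm_nonneg w, (httpos k).le]
  have hΦne : Φ.Nonempty := ⟨xb, hx⟩
  have hex : ∀ k, ∃ p ∈ Φ, dist (y k) p < tt k * (κ' * (‖A w - u‖ + 2*ε₀) + ε₀) := by
    intro k
    refine (Metric.infDist_lt_iff hΦne).1 ?_
    have h1 := (hP (y k) (hdirk k))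
    have h2 : κ' * Metric.infDist (φ (y k)) C ≤ κ' * (tt k * (‖A w - u‖ + 2*ε₀)) :=
      mul_le_mul_of_nonneg_left (yC k) hκ'
    have h3 : (0:ℝ) < tt k * ε₀ := mul_pos (httpos k) hε₀
    calc Metric.infDist (y k) Φ ≤ κ' * (tt k * (‖A w - u‖ + 2*ε₀)) := h1.trans h2
      _ < tt k * (κ' * (‖A w - u‖ + 2*ε₀) + ε₀) := by nlinarith [mul_pos (httpos k) hε₀]
  choose x' hx'1 hx'2 using hex
  set R := κ' * (‖A w - u‖ + 2*ε₀) + ε₀ with hR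
  set z : ℕ → EuclideanSpace ℝ (Fin n) := fun k => (tt k)⁻¹ • (x' k - xb) with hz
  have hzx : ∀ k, x' k = xb + tt k • z k := by
    intro k
    rw [hz]
    simp only [smul_inv_smul₀ (httpos k).ne']
    abel
  have hzw : ∀ k, ‖w - z k‖ ≤ R := by
    intro k
    have hne : tt k ≠ 0 := (httpos k).ne'
    have hd2 : dist (y k) (x' k) = tt k * ‖w - z k‖ := by
      rw [dist_eq_norm, hy, hzx k]
      have : xb + tt k • w - (xb + tt k • z k) = tt k • (w - z k) := by
        rw [smul_sub]; abel
      rw [this, norm_smul, Real.norm_eq_abs, abs_of_pos (httpos k)]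
    have := hx'2 k
    rw [hd2] at this
    have := (mul_lt_mul_iff_right₀ (httpos k)).mp this
    exact this.le
  have hbdd : ∀ k, z k ∈ Metric.closedBall w R := by
    intro k
    rw [Metric.mem_closedBall, dist_comm, dist_eq_norm]
    exact hzw k
  obtain ⟨zl, hzl, σ, hσ, hconv⟩ :=
    tendsto_subseq_of_bounded Metric.isBounded_closedBall hbdd
  rw [IsClosed.closure_eq Metric.isClosed_closedBall] at hzl
  -- A zl ∈ T
  have hAzl : A zl ∈ T := by
    refine ⟨fun k => tt (σ k), fun k => (tt (σ k))⁻¹ • (φ (x' (σ k)) - φ xb),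
      fun k => httpos _, htt0.comp hσ.tendsto_atTop, ?_, ?_⟩
    · have heq : (fun k => (tt (σ k))⁻¹ • (φ (x' (σ k)) - φ xb))
          = fun k => (tt (σ k))⁻¹ • (φ (xb + tt (σ k) • z (σ k)) - φ xb) := by
        funext k; rw [← hzx (σ k)]
      rw [heq]
      exact diffQuot_tendsto φ hφ xb (fun k => tt (σ k)) (fun k => httpos _)
        (htt0.comp hσ.tendsto_atTop) (fun k => z (σ k)) zl hconv
    · intro k
      have hne : tt (σ k) ≠ 0 := (httpos _).ne'
      rw [smul_inv_smul₀ hne, add_sub_cancel]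
      exact hx'1 (σ k)
  refine (Metric.infDist_le_dist_of_mem (s := {w' | A w' ∈ T}) hAzl).trans ?_
  rw [Metric.mem_closedBall] at hzl
  rw [dist_comm] at hzl
  exact hzl

theorem stmt_5 {n m : ℕ} (φ : EuclideanSpace ℝ (Fin n) → EuclideanSpace ℝ (Fin m))
    (hφ : ContDiff ℝ 1 φ) (C : Set (EuclideanSpace ℝ (Fin m))) (hC : IsClosed C)
    (xb : EuclideanSpace ℝ (Fin n)) (hx : φ xb ∈ C)
    (d : EuclideanSpace ℝ (Fin n)) (hd : fderiv ℝ φ xb d ∈ tangentCone' C (φ xb))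
    (κb : ℝ) (hM : dirMetrSubregMod φ C xb d κb) :
    ∀ κ > κb, ∃ ρ > (0:ℝ), ∀ w : EuclideanSpace ℝ (Fin n), ‖w - d‖ < ρ →
      Metric.infDist w {w' | fderiv ℝ φ xb w' ∈ tangentCone' C (φ xb)} ≤
        κ * Metric.infDist (fderiv ℝ φ xb w) (tangentCone' C (φ xb)) := by
  intro κ hκ
  have hκ'1 : κb < (κb + κ)/2 := by linarith
  have hκ'2 : (κb + κ)/2 < κ := by linarith
  set κ' := (κb + κ)/2 with hκ'def
  obtain ⟨ρM, hρM, δM, hδM, hP⟩ := hM κ' hκ'1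
  have hρ : ∃ ρ > (0:ℝ), ∀ w : EuclideanSpace ℝ (Fin n), ‖w - d‖ < ρ →
      ‖‖d‖ • w - ‖w‖ • d‖ ≤ δM * (‖w‖ * ‖d‖) := by
    by_cases hd0 : d = 0
    · exact ⟨1, one_pos, fun w _ => by simp [hd0]⟩
    · have hdn : 0 < ‖d‖ := norm_pos_iff.2 hd0
      refine ⟨min (‖d‖/2) (δM*‖d‖/4), by positivity, fun w hw => ?_⟩
      have h1 : ‖w - d‖ ≤ ‖d‖/2 := (lt_of_lt_of_le hw (min_le_left _ _)).le
      have h2 : ‖w - d‖ ≤ δM*‖d‖/4 := (lt_of_lt_of_le hw (min_le_right _ _)).le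
      have hwn : ‖d‖/2 ≤ ‖w‖ := by
        have h3 := norm_sub_norm_le d w
        rw [norm_sub_rev] at h3
        linarith
      have habs : |‖d‖ - ‖w‖| ≤ ‖w - d‖ := by
        rw [norm_sub_rev]
        exact abs_norm_sub_norm_le d w
      have key : ‖‖d‖ • w - ‖w‖ • d‖ ≤ 2*‖d‖*‖w - d‖ := by
        have he : ‖d‖ • w - ‖w‖ • d = ‖d‖ • (w - d) + (‖d‖ - ‖w‖) • d := by
          rw [smul_sub, sub_smul]; abel
        rw [he]
        calc ‖‖d‖ • (w - d) + (‖d‖ - ‖w‖) • d‖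
            ≤ ‖‖d‖ • (w - d)‖ + ‖(‖d‖ - ‖w‖) • d‖ := norm_add_le _ _
          _ = ‖d‖ * ‖w - d‖ + |‖d‖ - ‖w‖| * ‖d‖ := by
              rw [norm_smul, norm_smul, Real.norm_eq_abs, Real.norm_eq_abs,
                abs_of_nonneg (norm_nonneg d)]
          _ ≤ 2*‖d‖*‖w - d‖ := by nlinarith [norm_nonneg (w - d), habs]
      calc ‖‖d‖ • w - ‖w‖ • d‖ ≤ 2*‖d‖*‖w - d‖ := key
        _ ≤ δM * (‖w‖ * ‖d‖) := by
            nlinarith [mul_le_mul_of_nonneg_left h2 (by positivity : (0:ℝ) ≤ 2*‖d‖),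
              mul_le_mul_of_nonneg_left hwn (by positivity : (0:ℝ) ≤ δM*‖d‖)]
  obtain ⟨ρ, hρpos, hρprop⟩ := hρ
  refine ⟨ρ, hρpos, fun w hw => ?_⟩
  have hdir := hρprop w hw
  have hTne : (tangentCone' C (φ xb)).Nonempty := ⟨_, hd⟩
  by_cases hκ'0 : 0 ≤ κ'
  · -- main case
    have key : ∀ u ∈ tangentCone' C (φ xb),
        Metric.infDist w {w' | fderiv ℝ φ xb w' ∈ tangentCone' C (φ xb)} ≤
          κ' * ‖fderiv ℝ φ xb w - u‖ := by
      intro u hu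
      apply le_of_forall_pos_le_add'
      intro ε hε
      have hden : (0:ℝ) < 2*κ' + 1 := by linarith
      have hε₀ : 0 < ε / (2*κ' + 1) := by positivity
      have hcb := coreBound φ hφ C xb hx d κ' ρM δM hκ'0 hρM hδM hP w hdir u hu _ hε₀
      have heq : κ' * (‖fderiv ℝ φ xb w - u‖ + 2*(ε/(2*κ'+1))) + ε/(2*κ'+1)
          = κ' * ‖fderiv ℝ φ xb w - u‖ + (2*κ'+1) * (ε/(2*κ'+1)) := by ring
      have heq2 : (2*κ'+1) * (ε/(2*κ'+1)) = ε := by field_simp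
      rw [heq, heq2] at hcb
      exact hcb
    have key2 : Metric.infDist w {w' | fderiv ℝ φ xb w' ∈ tangentCone' C (φ xb)} ≤
        κ' * Metric.infDist (fderiv ℝ φ xb w) (tangentCone' C (φ xb)) := by
      apply le_of_forall_pos_le_add'
      intro ε hε
      have hden : (0:ℝ) < κ' + 1 := by linarith
      have hε₁ : (0:ℝ) < ε/(κ'+1) := by positivity
      obtain ⟨u, huT, hdu⟩ := (Metric.infDist_lt_iff hTne).1
        (lt_add_of_pos_right (Metric.infDist (fderiv ℝ φ xb w) (tangentCone' C (φ xb))) hε₁)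
      have h8 : ‖fderiv ℝ φ xb w - u‖ ≤
          Metric.infDist (fderiv ℝ φ xb w) (tangentCone' C (φ xb)) + ε/(κ'+1) := by
        rw [← dist_eq_norm]; exact hdu.le
      have h9 : κ' * (ε/(κ'+1)) ≤ ε := by
        rw [← mul_div_assoc, div_le_iff₀ hden]
        nlinarith
      calc Metric.infDist w {w' | fderiv ℝ φ xb w' ∈ tangentCone' C (φ xb)}
          ≤ κ' * ‖fderiv ℝ φ xb w - u‖ := key u huT
        _ ≤ κ' * (Metric.infDist (fderiv ℝ φ xb w) (tangentCone' C (φ xb)) + ε/(κ'+1)) :=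
            mul_le_mul_of_nonneg_left h8 hκ'0
        _ ≤ κ' * Metric.infDist (fderiv ℝ φ xb w) (tangentCone' C (φ xb)) + ε := by
            rw [mul_add]; linarith
    exact key2.trans (mul_le_mul_of_nonneg_right hκ'2.le Metric.infDist_nonneg)
  · -- κ' < 0 : everything degenerates
    push_neg at hκ'0
    set t : ℕ → ℝ := fun k => ρM / ((‖w‖ + 1) * (k + 1)) with htdef
    have htpos : ∀ k, 0 < t k := fun k => by positivity
    have ht0 : Tendsto t atTop (𝓝 0) := by
      have h1 : Tendsto (fun k : ℕ => 1/((k:ℝ)+1)) atTop (𝓝 0) :=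
        tendsto_one_div_add_atTop_nhds_zero_nat
      have h2 := h1.const_mul (ρM / (‖w‖ + 1))
      rw [mul_zero] at h2
      convert h2 using 2 with k
      rw [htdef]
      field_simp
    have hmemΦ : ∀ k, φ (xb + t k • w) ∈ C := by
      intro k
      have hdirk : (xb + t k • w) - xb ∈ dirNbhd ρM δM d := by
        rw [add_sub_cancel_left]
        constructor
        · rw [norm_smul, Real.norm_eq_abs, abs_of_pos (htpos k)]
          have e : t k * (‖w‖ + 1) = ρM / ((k:ℝ)+1) := by
            rw [htdef]; field_simp
          have e2 : ρM / ((k:ℝ)+1) ≤ ρM := by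
            apply div_le_self hρM.le
            have : (0:ℝ) ≤ (k:ℝ) := Nat.cast_nonneg k
            linarith
          have e3 : t k * ‖w‖ < t k * (‖w‖ + 1) :=
            mul_lt_mul_of_pos_left (by linarith) (htpos k)
          linarith
        · have e1 : ‖d‖ • (t k • w) = t k • (‖d‖ • w) := smul_comm _ _ _
          have e2 : ‖t k • w‖ • d = t k • (‖w‖ • d) := by
            rw [norm_smul, Real.norm_eq_abs, abs_of_pos (htpos k), mul_smul]
          rw [e1, e2, ← smul_sub]
          simp only [norm_smul, Real.norm_eq_abs, abs_of_pos (htpos k)]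
          nlinarith [norm_nonneg d, norm_nonneg w, (htpos k).le]
      have h1 := hP _ hdirk
      have h2 : κ' * Metric.infDist (φ (xb + t k • w)) C ≤ 0 :=
        mul_nonpos_of_nonpos_of_nonneg hκ'0.le Metric.infDist_nonneg
      have hcl : IsClosed {z : EuclideanSpace ℝ (Fin n) | φ z ∈ C} :=
        hC.preimage (hφ.continuous)
      have h4 : Metric.infDist (xb + t k • w) {z | φ z ∈ C} = 0 :=
        le_antisymm (h1.trans h2) Metric.infDist_nonneg
      exact (hcl.mem_iff_infDist_zero ⟨xb, hx⟩).2 h4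
    have hAw : fderiv ℝ φ xb w ∈ tangentCone' C (φ xb) := by
      refine ⟨t, fun k => (t k)⁻¹ • (φ (xb + t k • w) - φ xb), htpos, ht0, ?_, ?_⟩
      · exact diffQuot_tendsto φ hφ xb t htpos ht0 (fun _ => w) w tendsto_const_nhds
      · intro k
        rw [smul_inv_smul₀ (htpos k).ne', add_sub_cancel]
        exact hmemΦ k
    have h5 : Metric.infDist w {w' | fderiv ℝ φ xb w' ∈ tangentCone' C (φ xb)} = 0 :=
      Metric.infDist_zero_of_mem hAw
    have h6 : Metric.infDist (fderiv ℝ φ xb w) (tangentCone' C (φ xb)) = 0 :=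
      Metric.infDist_zero_of_mem hAw
    rw [h5, h6, mul_zero]
end

section
/- Let g: R^n → R^m be twice continuously differentiable, Λ ⊆ R^m closed, x̄ with g(x̄) ∈ Λ, and F := {x : g(x) ∈ Λ}. If M(x) := g(x) − Λ is metrically subregular at (x̄, 0) in direction d, then d ∈ T_F(x̄) if and only if ∇g(x̄)d ∈ T_Λ(g(x̄)). -/
open Filter Topology Pointwise RealInnerProductSpace

open Asymptotics in
lemma key_tendsto {E F : Type*} [NormedAddCommGroup E] [NormedSpace ℝ E]
    [NormedAddCommGroup F] [NormedSpace ℝ F]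
    {g : E → F} {xb d : E} {G : E →L[ℝ] F} (hg : HasFDerivAt g G xb)
    {t : ℕ → ℝ} {v : ℕ → E} (ht : ∀ k, 0 < t k) (ht0 : Tendsto t atTop (𝓝 0))
    (hv : Tendsto v atTop (𝓝 d)) :
    Tendsto (fun k => (t k)⁻¹ • (g (xb + t k • v k) - g xb)) atTop (𝓝 (G d)) := by
  have hrem := hasFDerivAt_iff_isLittleO_nhds_zero.1 hg
  have hh : Tendsto (fun k => t k • v k) atTop (𝓝 0) := by
    simpa using ht0.smul hv
  have h1 : (fun k => g (xb + t k • v k) - g xb - G (t k • v k)) =o[atTop]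
      fun k => t k • v k := hrem.comp_tendsto hh
  have hO : (fun k => t k • v k) =O[atTop] t := by
    rw [isBigO_iff]
    refine ⟨‖d‖ + 1, ?_⟩
    filter_upwards [hv.norm.eventually_le_const (lt_add_one ‖d‖)] with k hk
    rw [norm_smul]
    calc ‖t k‖ * ‖v k‖ ≤ ‖t k‖ * (‖d‖ + 1) := by
          exact mul_le_mul_of_nonneg_left hk (norm_nonneg _)
      _ = (‖d‖ + 1) * ‖t k‖ := mul_comm _ _
  have h2 := h1.trans_isBigO hO
  have h3 := h2.tendsto_inv_smul_nhds_zero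
  have h4 : Tendsto (fun k => G (v k)) atTop (𝓝 (G d)) := (G.continuous.tendsto d).comp hv
  have h5 := h3.add h4
  rw [zero_add] at h5
  refine h5.congr fun k => ?_
  rw [map_smul, smul_sub, inv_smul_smul₀ (ht k).ne']
  abel

theorem stmt_6 {n m : ℕ} (g : EuclideanSpace ℝ (Fin n) → EuclideanSpace ℝ (Fin m))
    (hg : ContDiff ℝ 2 g) (Λ : Set (EuclideanSpace ℝ (Fin m))) (hΛ : IsClosed Λ)
    (xb : EuclideanSpace ℝ (Fin n)) (hx : g xb ∈ Λ)
    (d : EuclideanSpace ℝ (Fin n)) (hM : dirMetrSubreg g Λ xb d) :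
    d ∈ tangentCone' {x | g x ∈ Λ} xb ↔ fderiv ℝ g xb d ∈ tangentCone' Λ (g xb) := by
  set G := fderiv ℝ g xb with hG
  have hdiff : HasFDerivAt g G xb :=
    ((hg.differentiable (by norm_num)).differentiableAt).hasFDerivAt
  constructor
  · rintro ⟨t, v, ht, ht0, hv, hmem⟩
    refine ⟨t, fun k => (t k)⁻¹ • (g (xb + t k • v k) - g xb), ht, ht0,
      key_tendsto hdiff ht ht0 hv, fun k => ?_⟩
    rw [smul_inv_smul₀ (ht k).ne', add_sub_cancel]
    exact hmem k
  · rintro ⟨s, u, hs, hs0, hu, humem⟩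
    obtain ⟨κ, hκ, ρ, hρ, δ, hδ, hsub⟩ := hM
    set FS : Set (EuclideanSpace ℝ (Fin n)) := {x | g x ∈ Λ} with hFS
    have hFne : FS.Nonempty := ⟨xb, hx⟩
    -- quotient tendsto
    have hq0 : Tendsto (fun k => (s k)⁻¹ • (g (xb + s k • d) - g xb)) atTop (𝓝 (G d)) :=
      key_tendsto hdiff hs hs0 tendsto_const_nhds
    set q : ℕ → ℝ := fun k => ‖(s k)⁻¹ • (g (xb + s k • d) - g xb) - u k‖ with hqdef
    have hq : Tendsto q atTop (𝓝 0) := by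
      have := (hq0.sub hu).norm
      simpa using this
    -- choose nearest-ish points
    have hchoice : ∀ k, ∃ x ∈ FS,
        dist (xb + s k • d) x < Metric.infDist (xb + s k • d) FS + s k * (k + 1 : ℝ)⁻¹ := by
      intro k
      have hpos : 0 < s k * (k + 1 : ℝ)⁻¹ := mul_pos (hs k) (by positivity)
      exact (Metric.infDist_lt_iff hFne).1 (by linarith)
    choose x hxF hxd using hchoice
    refine ⟨s, fun k => (s k)⁻¹ • (x k - xb), hs, hs0, ?_, fun k => ?_⟩
    swap
    · show xb + s k • (s k)⁻¹ • (x k - xb) ∈ FS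
      rw [smul_inv_smul₀ (hs k).ne', add_sub_cancel]
      exact hxF k
    -- main convergence
    rw [tendsto_iff_norm_sub_tendsto_zero]
    have hb : Tendsto (fun k => κ * q k + (k + 1 : ℝ)⁻¹) atTop (𝓝 0) := by
      have h1 : Tendsto (fun k : ℕ => (k + 1 : ℝ)⁻¹) atTop (𝓝 0) := by
        simpa using tendsto_one_div_add_atTop_nhds_zero_nat (𝕜 := ℝ)
      have := (hq.const_mul κ).add h1
      simpa using this
    refine squeeze_zero' (Eventually.of_forall fun k => norm_nonneg _) ?_ hb
    have hev : ∀ᶠ k in atTop, s k * ‖d‖ < ρ := by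
      have : Tendsto (fun k => s k * ‖d‖) atTop (𝓝 (0 * ‖d‖)) := hs0.mul_const _
      rw [zero_mul] at this
      exact this.eventually_lt_const hρ
    filter_upwards [hev] with k hk
    -- y_k := xb + s k • d is in the directional neighborhood
    have hnbhd : (xb + s k • d) - xb ∈ dirNbhd ρ δ d := by
      constructor
      · rw [add_sub_cancel_left, norm_smul, Real.norm_eq_abs, abs_of_pos (hs k)]
        exact hk
      · have : ‖d‖ • ((xb + s k • d) - xb) - ‖(xb + s k • d) - xb‖ • d = 0 := by
          rw [add_sub_cancel_left, norm_smul, Real.norm_eq_abs, abs_of_pos (hs k),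
            smul_smul, mul_smul]
          module
        rw [this, norm_zero]
        exact mul_nonneg hδ.le (by positivity)
    have hsubk := hsub _ hnbhd
    -- infDist (g y_k) Λ ≤ s k * q k
    have hgd : Metric.infDist (g (xb + s k • d)) Λ ≤ s k * q k := by
      have hmemΛ : g xb + s k • u k ∈ Λ := humem k
      refine (Metric.infDist_le_dist_of_mem (x := g (xb + s k • d)) hmemΛ).trans ?_
      rw [dist_eq_norm]
      have heq : g (xb + s k • d) - (g xb + s k • u k)
          = s k • ((s k)⁻¹ • (g (xb + s k • d) - g xb) - u k) := by
        rw [smul_sub, smul_inv_smul₀ (hs k).ne']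
        abel
      rw [heq, norm_smul, Real.norm_eq_abs, abs_of_pos (hs k)]
    -- final bound
    have hdist : dist (xb + s k • d) (x k) ≤ κ * (s k * q k) + s k * (k + 1 : ℝ)⁻¹ := by
      have := hxd k
      have h2 : Metric.infDist (xb + s k • d) FS ≤ κ * (s k * q k) :=
        hsubk.trans (by nlinarith [hq0, hgd, hκ.le])
      linarith
    have hnorm : ‖(s k)⁻¹ • (x k - xb) - d‖ = (s k)⁻¹ * dist (xb + s k • d) (x k) := by
      have heq : (s k)⁻¹ • (x k - xb) - d = (s k)⁻¹ • (x k - (xb + s k • d)) := by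
        rw [smul_sub, smul_sub, smul_add, inv_smul_smul₀ (hs k).ne']
        abel
      rw [heq, norm_smul, Real.norm_eq_abs, abs_of_pos (inv_pos.2 (hs k)), dist_comm,
        dist_eq_norm]
    rw [hnorm]
    rw [inv_mul_le_iff₀ (hs k)]
    calc dist (xb + s k • d) (x k) ≤ κ * (s k * q k) + s k * (k + 1 : ℝ)⁻¹ := hdist
      _ = s k * (κ * q k + (k + 1 : ℝ)⁻¹) := by ring
end

section
/- Let g: R^n → R^m be twice continuously differentiable, Λ ⊆ R^m closed, g(x̄) ∈ Λ, F := {x : g(x) ∈ Λ}, and suppose M(x) := g(x) − Λ is metrically subregular at (x̄, 0) in direction d with ∇g(x̄)d ∈ T_Λ(g(x̄)). Then T_F²(x̄; d) = {w : ∇g(x̄)w + ∇²g(x̄)(d,d) ∈ T_Λ²(g(x̄); ∇g(x̄)d)}. -/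
open Filter Topology Pointwise RealInnerProductSpace

section Aux
open Filter Topology Set

variable {E F : Type*} [NormedAddCommGroup E] [NormedSpace ℝ E]
  [NormedAddCommGroup F] [NormedSpace ℝ F]

lemma taylor2_isLittleO (g : E → F) (hg : ContDiff ℝ 2 g) (x : E) :
    (fun u => g (x + u) - g x - fderiv ℝ g x u
        - (1/2 : ℝ) • fderiv ℝ (fderiv ℝ g) x u u)
      =o[𝓝 0] fun u => ‖u‖ ^ 2 := by
  set A := fderiv ℝ g x with hA
  set B := fderiv ℝ (fderiv ℝ g) x with hB
  have hdg : ContDiff ℝ 1 (fderiv ℝ g) := hg.fderiv_right (by norm_num)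
  have hBd : HasFDerivAt (fderiv ℝ g) B x :=
    ((hdg.differentiable (by norm_num)) x).hasFDerivAt
  have hlo : (fun h => fderiv ℝ g (x + h) - fderiv ℝ g x - B h) =o[𝓝 0] fun h => h :=
    hasFDerivAt_iff_isLittleO_nhds_zero.1 hBd
  rw [Asymptotics.isLittleO_iff]
  intro ε hε
  have h1 := Asymptotics.isLittleO_iff.1 hlo hε
  rw [Metric.eventually_nhds_iff] at h1 ⊢
  obtain ⟨δ, hδ, hδb⟩ := h1
  refine ⟨δ, hδ, fun {u} hu => ?_⟩
  rw [dist_zero_right] at hu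
  set φ : ℝ → F := fun s => g (x + s • u) - s • (A u) - (s ^ 2 / 2) • (B u u) with hφ
  have hder : ∀ s : ℝ, HasDerivAt φ
      ((fderiv ℝ g (x + s • u) - A - B (s • u)) u) s := by
    intro s
    have c0 : HasDerivAt (fun s : ℝ => x + s • u) u s := by
      simpa using ((hasDerivAt_id s).smul_const u).const_add x
    have c1 : HasDerivAt (fun s : ℝ => g (x + s • u)) (fderiv ℝ g (x + s • u) u) s :=
      (((hg.differentiable (by norm_num)) (x + s • u)).hasFDerivAt).comp_hasDerivAt s c0
    have c2 : HasDerivAt (fun s : ℝ => s • (A u)) (A u) s := by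
      simpa using (hasDerivAt_id s).smul_const (A u)
    have c3 : HasDerivAt (fun s : ℝ => (s ^ 2 / 2) • (B u u)) (s • (B u u)) s := by
      have := ((hasDerivAt_pow 2 s).div_const 2).smul_const (B u u)
      simpa [mul_comm] using this
    have := (c1.sub c2).sub c3
    convert this using 1
    · rfl
    simp [ContinuousLinearMap.sub_apply, map_smul, sub_smul]
  have bound : ∀ s ∈ Ico (0:ℝ) 1,
      ‖(fderiv ℝ g (x + s • u) - A - B (s • u)) u‖ ≤ (ε * ‖u‖) * ‖u‖ := by
    intro s hs
    have hsu : dist (s • u) 0 < δ := by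
      rw [dist_zero_right, norm_smul, Real.norm_eq_abs, abs_of_nonneg hs.1]
      calc s * ‖u‖ ≤ 1 * ‖u‖ := by
            apply mul_le_mul_of_nonneg_right (le_of_lt hs.2) (norm_nonneg u)
        _ < δ := by simpa using hu
    have := hδb hsu
    calc ‖(fderiv ℝ g (x + s • u) - A - B (s • u)) u‖
        ≤ ‖fderiv ℝ g (x + s • u) - A - B (s • u)‖ * ‖u‖ :=
          ContinuousLinearMap.le_opNorm _ u
      _ ≤ (ε * ‖s • u‖) * ‖u‖ := by
          apply mul_le_mul_of_nonneg_right _ (norm_nonneg u)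
          simpa using this
      _ ≤ (ε * ‖u‖) * ‖u‖ := by
          apply mul_le_mul_of_nonneg_right _ (norm_nonneg u)
          apply mul_le_mul_of_nonneg_left _ (le_of_lt hε)
          rw [norm_smul, Real.norm_eq_abs, abs_of_nonneg hs.1]
          calc s * ‖u‖ ≤ 1 * ‖u‖ :=
                mul_le_mul_of_nonneg_right (le_of_lt hs.2) (norm_nonneg u)
            _ = ‖u‖ := one_mul _
  have key := norm_image_sub_le_of_norm_deriv_le_segment_01'
    (f := φ) (f' := fun s => (fderiv ℝ g (x + s • u) - A - B (s • u)) u)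
    (fun s _ => (hder s).hasDerivWithinAt) bound
  have hφ1 : φ 1 = g (x + u) - A u - (1/2 : ℝ) • (B u u) := by
    simp [hφ]
  have hφ0 : φ 0 = g x := by simp [hφ]
  rw [hφ1, hφ0] at key
  calc ‖g (x + u) - g x - A u - (1/2 : ℝ) • B u u‖
      = ‖g (x + u) - A u - (1/2 : ℝ) • B u u - g x‖ := by congr 1; abel
    _ ≤ ε * ‖u‖ * ‖u‖ := key
    _ = ε * ‖‖u‖ ^ 2‖ := by
        rw [Real.norm_eq_abs, abs_of_nonneg (by positivity)]; ring

lemma taylor2_seq (g : E → F) (hg : ContDiff ℝ 2 g) (x d v : E)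
    (t : ℕ → ℝ) (vk : ℕ → E) (ht : ∀ k, 0 < t k) (ht0 : Tendsto t atTop (𝓝 0))
    (hv : Tendsto vk atTop (𝓝 v)) :
    Tendsto (fun k => (2 / (t k) ^ 2) •
        (g (x + t k • d + ((t k) ^ 2 / 2) • vk k) - g x - (t k) • (fderiv ℝ g x d)))
      atTop (𝓝 (fderiv ℝ g x v + fderiv ℝ (fderiv ℝ g) x d d)) := by
  set A := fderiv ℝ g x with hA
  set B := fderiv ℝ (fderiv ℝ g) x with hB
  set a : ℕ → E := fun k => d + (t k / 2) • vk k with ha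
  set u : ℕ → E := fun k => t k • d + ((t k) ^ 2 / 2) • vk k with hu
  have htne : ∀ k, t k ≠ 0 := fun k => ne_of_gt (ht k)
  have hua : ∀ k, u k = t k • a k := by
    intro k
    simp only [hu, ha, smul_add, smul_smul]
    congr 2
    field_simp
  have hta : Tendsto a atTop (𝓝 d) := by
    have h2 := (ht0.div_const 2).smul hv
    have h3 : Tendsto (fun k => d + (t k / 2) • vk k) atTop (𝓝 (d + ((0:ℝ)/2) • v)) :=
      tendsto_const_nhds.add h2
    simpa using h3
  have hu0 : Tendsto u atTop (𝓝 0) := by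
    have h := ht0.smul hta
    rw [show u = fun k => t k • a k from funext hua]
    simpa using h
  set R : E → F := fun u => g (x + u) - g x - A u - (1/2 : ℝ) • B u u with hR
  have hlo := (taylor2_isLittleO g hg x).comp_tendsto hu0
  -- decompose
  have hdecomp : (fun k => (2 / (t k) ^ 2) •
      (g (x + t k • d + ((t k) ^ 2 / 2) • vk k) - g x - (t k) • A d))
      = fun k => A (vk k) + B (a k) (a k) + (2 / (t k) ^ 2) • R (u k) := by
    funext k
    have h1 : x + t k • d + ((t k) ^ 2 / 2) • vk k = x + u k := by
      simp [hu, add_assoc]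
    have h2 : A (u k) = t k • A d + ((t k) ^ 2 / 2) • A (vk k) := by
      simp [hu, map_add, map_smul]
    have h3 : B (u k) (u k) = (t k * t k) • B (a k) (a k) := by
      rw [hua k]
      simp [map_smul, smul_smul, ContinuousLinearMap.smul_apply]
    rw [h1]
    have : g (x + u k) - g x - t k • A d
        = ((t k) ^ 2 / 2) • A (vk k) + (1/2 : ℝ) • B (u k) (u k) + R (u k) := by
      simp only [hR]
      rw [h2]
      abel
    rw [this, h3, smul_add, smul_add, smul_smul, smul_smul, smul_smul]
    have e1 : 2 / t k ^ 2 * (t k ^ 2 / 2) = 1 := by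
      field_simp [htne k]
    have e2 : 2 / t k ^ 2 * (1 / 2) * (t k * t k) = 1 := by
      field_simp [htne k]
    rw [e1, e2, one_smul, one_smul]
  rw [hdecomp]
  have l1 : Tendsto (fun k => A (vk k)) atTop (𝓝 (A v)) := (A.continuous.tendsto v).comp hv
  have l2 : Tendsto (fun k => B (a k) (a k)) atTop (𝓝 (B d d)) := by
    have hc : Continuous (fun p : E × E => B p.1 p.2) := B.continuous₂
    have := (hc.tendsto (d, d)).comp (hta.prodMk_nhds hta)
    exact this
  have l3 : Tendsto (fun k => (2 / (t k) ^ 2) • R (u k)) atTop (𝓝 0) := by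
    -- ‖u k‖^2 = O(t k ^2)
    have hOb : ∀ᶠ k in atTop, ‖a k‖ ≤ ‖d‖ + 1 := by
      have := (hta.norm.eventually_le_const (by linarith [norm_nonneg d] : ‖d‖ < ‖d‖ + 1))
      exact this
    rw [NormedAddCommGroup.tendsto_nhds_zero]
    intro ε hε
    have hc : (0:ℝ) < ε / (4 * (‖d‖ + 1) ^ 2) := by positivity
    have hev := Asymptotics.isLittleO_iff.1 hlo hc
    filter_upwards [hev, hOb] with k hk hb
    have hnu : ‖u k‖ = t k * ‖a k‖ := by
      rw [hua k, norm_smul, Real.norm_eq_abs, abs_of_pos (ht k)]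
    have hRb : ‖R (u k)‖ ≤ ε / (4 * (‖d‖ + 1) ^ 2) * (t k * ‖a k‖) ^ 2 := by
      have := hk
      simp only [Function.comp] at this
      calc ‖R (u k)‖ ≤ ε / (4 * (‖d‖ + 1) ^ 2) * ‖‖u k‖ ^ 2‖ := this
        _ = ε / (4 * (‖d‖ + 1) ^ 2) * (t k * ‖a k‖) ^ 2 := by
            rw [Real.norm_eq_abs, abs_of_nonneg (by positivity), hnu]
    rw [norm_smul, Real.norm_eq_abs, abs_of_pos (div_pos two_pos (pow_pos (ht k) 2))]
    have hd1 : (0:ℝ) < ‖d‖ + 1 := by linarith [norm_nonneg d]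
    have haa : ‖a k‖ ^ 2 ≤ (‖d‖ + 1) ^ 2 := by
      exact pow_le_pow_left₀ (norm_nonneg _) hb 2
    calc 2 / t k ^ 2 * ‖R (u k)‖
        ≤ 2 / t k ^ 2 * (ε / (4 * (‖d‖ + 1) ^ 2) * (t k * ‖a k‖) ^ 2) := by
          apply mul_le_mul_of_nonneg_left hRb (by positivity)
      _ = ε / 2 * (‖a k‖ ^ 2 / (‖d‖ + 1) ^ 2) := by
          have hd2 : (‖d‖ + 1) ≠ 0 := by positivity
          field_simp [htne k]
          ring
      _ ≤ ε / 2 * 1 := by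
          apply mul_le_mul_of_nonneg_left _ (by positivity)
          rw [div_le_one (by positivity)]
          exact haa
      _ < ε := by linarith
  have := (l1.add l2).add l3
  simpa using this


lemma smul_cancel_half {F : Type*} [NormedAddCommGroup F] [NormedSpace ℝ F]
    {t : ℝ} (ht : t ≠ 0) (c : F) :
    (t^2/2) • ((2/t^2) • c) = c := by
  rw [smul_smul, show t^2/2 * (2/t^2) = 1 by field_simp, one_smul]
end Aux

set_option maxHeartbeats 2000000 in
theorem stmt_7 {n m : ℕ} (g : EuclideanSpace ℝ (Fin n) → EuclideanSpace ℝ (Fin m))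
    (hg : ContDiff ℝ 2 g) (Λ : Set (EuclideanSpace ℝ (Fin m))) (hΛ : IsClosed Λ)
    (xb : EuclideanSpace ℝ (Fin n)) (hx : g xb ∈ Λ)
    (d : EuclideanSpace ℝ (Fin n)) (hd : fderiv ℝ g xb d ∈ tangentCone' Λ (g xb))
    (hM : dirMetrSubreg g Λ xb d) :
    tangentCone2 {x | g x ∈ Λ} xb d =
      {w | fderiv ℝ g xb w + iteratedFDeriv ℝ 2 g xb ![d, d] ∈
        tangentCone2 Λ (g xb) (fderiv ℝ g xb d)} := by

  set A := fderiv ℝ g xb with hA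
  set B := fderiv ℝ (fderiv ℝ g) xb with hB
  have hQ : iteratedFDeriv ℝ 2 g xb ![d, d] = B d d := by
    rw [iteratedFDeriv_two_apply]
    simp
    rfl
  ext w
  simp only [Set.mem_setOf_eq, hQ]
  constructor
  · rintro ⟨t, v, ht, ht0, hv, hmem⟩
    have htne : ∀ k, t k ≠ 0 := fun k => ne_of_gt (ht k)
    refine ⟨t, fun k => (2/(t k)^2) •
        (g (xb + t k • d + ((t k)^2/2) • v k) - g xb - t k • A d),
      ht, ht0, taylor2_seq g hg xb d w t v ht ht0 hv, fun k => ?_⟩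
    have : g xb + t k • A d + ((t k)^2/2) • ((2/(t k)^2) •
        (g (xb + t k • d + ((t k)^2/2) • v k) - g xb - t k • A d))
        = g (xb + t k • d + ((t k)^2/2) • v k) := by
      rw [smul_cancel_half (htne k)]
      abel
    rw [this]
    exact hmem k
  · rintro ⟨t, z, ht, ht0, hz, hmem⟩
    have htne : ∀ k, t k ≠ 0 := fun k => ne_of_gt (ht k)
    obtain ⟨κ, hκ, ρ, hρ, δ, hδ, hsub⟩ := hM
    set F' : Set (EuclideanSpace ℝ (Fin n)) := {x | g x ∈ Λ} with hF'
    have hF'c : IsClosed F' := hΛ.preimage hg.continuous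
    have hF'ne : F'.Nonempty := ⟨xb, hx⟩
    set y : ℕ → EuclideanSpace ℝ (Fin n) :=
      fun k => xb + t k • d + ((t k)^2/2) • w with hy
    set q : ℕ → EuclideanSpace ℝ (Fin m) :=
      fun k => (2/(t k)^2) • (g (y k) - g xb - t k • A d) with hqd
    have hq : Tendsto q atTop (𝓝 (A w + B d d)) :=
      taylor2_seq g hg xb d w t (fun _ => w) ht ht0 tendsto_const_nhds
    -- directional neighborhood eventually
    have hu0 : Tendsto (fun k => t k • d + ((t k)^2/2) • w) atTop (𝓝 0) := by
      have h1 : Tendsto (fun k => t k • d) atTop (𝓝 ((0:ℝ) • d)) :=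
        ht0.smul_const d
      have h2 : Tendsto (fun k => ((t k)^2/2) • w) atTop (𝓝 (((0:ℝ)^2/2) • w)) :=
        (((ht0.pow 2)).div_const 2).smul_const w
      have := h1.add h2
      simpa using this
    have hdirn : ∀ᶠ k in atTop, y k - xb ∈ dirNbhd ρ δ d := by
      have hyx : ∀ k, y k - xb = t k • d + ((t k)^2/2) • w := by
        intro k; simp [hy]; abel
      have hn1 : ∀ᶠ k in atTop, ‖t k • d + ((t k)^2/2) • w‖ < ρ := by
        have h := hu0.norm
        rw [norm_zero] at h
        exact h.eventually_lt_const hρ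
      have hn2 : ∀ᶠ k in atTop,
          ‖‖d‖ • (t k • d + ((t k)^2/2) • w) - ‖t k • d + ((t k)^2/2) • w‖ • d‖
            ≤ δ * (‖t k • d + ((t k)^2/2) • w‖ * ‖d‖) := by
        rcases eq_or_ne d 0 with hd0 | hd0
        · refine Eventually.of_forall fun k => ?_
          simp [hd0]
        · have hdp : (0:ℝ) < ‖d‖ := norm_pos_iff.2 hd0
          have hev : ∀ᶠ k in atTop,
              t k * (‖d‖ * ‖w‖ + δ * (‖d‖ * ‖w‖) / 2) < δ * (‖d‖ * ‖d‖) := by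
            have : Tendsto (fun k => t k * (‖d‖ * ‖w‖ + δ * (‖d‖ * ‖w‖) / 2)) atTop
                (𝓝 (0 * (‖d‖ * ‖w‖ + δ * (‖d‖ * ‖w‖) / 2))) :=
              ht0.mul_const _
            rw [zero_mul] at this
            exact this.eventually_lt_const (by positivity)
          filter_upwards [hev] with k hk
          set u := t k • d + ((t k)^2/2) • w with hud
          have e1 : ‖d‖ • u - ‖u‖ • d
              = ‖d‖ • (((t k)^2/2) • w) + ((t k * ‖d‖) - ‖u‖) • d := by
            simp only [hud, smul_add, sub_smul, smul_smul]
            rw [mul_comm (‖d‖) (t k)]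
            abel
          have e2 : ‖u - t k • d‖ = ((t k)^2/2) * ‖w‖ := by
            rw [show u - t k • d = ((t k)^2/2) • w by rw [hud]; abel,
              norm_smul, Real.norm_eq_abs, abs_of_pos (div_pos (pow_pos (ht k) 2) two_pos)]
          have e3 : |t k * ‖d‖ - ‖u‖| ≤ ((t k)^2/2) * ‖w‖ := by
            have : t k * ‖d‖ = ‖t k • d‖ := by
              rw [norm_smul, Real.norm_eq_abs, abs_of_pos (ht k)]
            rw [this]
            calc |‖t k • d‖ - ‖u‖| ≤ ‖t k • d - u‖ := abs_norm_sub_norm_le _ _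
              _ = ‖u - t k • d‖ := by rw [norm_sub_rev]
              _ = ((t k)^2/2) * ‖w‖ := e2
          have e4 : ‖u‖ ≥ t k * ‖d‖ - ((t k)^2/2) * ‖w‖ := by
            have h5 : ‖t k • d‖ ≤ ‖u‖ + ‖((t k)^2/2) • w‖ := by
              calc ‖t k • d‖ = ‖u - ((t k)^2/2) • w‖ := by
                    rw [hud]; congr 1; abel
                _ ≤ ‖u‖ + ‖((t k)^2/2) • w‖ := norm_sub_le _ _
            rw [norm_smul, norm_smul, Real.norm_eq_abs, Real.norm_eq_abs,
              abs_of_pos (ht k), abs_of_pos (div_pos (pow_pos (ht k) 2) two_pos)] at h5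
            linarith
          have lhs_le : ‖‖d‖ • u - ‖u‖ • d‖ ≤ (t k)^2 * ‖d‖ * ‖w‖ := by
            rw [e1]
            have b1 : ‖‖d‖ • (((t k)^2/2) • w)‖ = ‖d‖ * (((t k)^2/2) * ‖w‖) := by
              rw [norm_smul, Real.norm_eq_abs, abs_of_nonneg (norm_nonneg d),
                norm_smul, Real.norm_eq_abs, abs_of_pos (div_pos (pow_pos (ht k) 2) two_pos)]
            have b2 : ‖((t k * ‖d‖) - ‖u‖) • d‖ ≤ (((t k)^2/2) * ‖w‖) * ‖d‖ := by
              rw [norm_smul, Real.norm_eq_abs]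
              exact mul_le_mul_of_nonneg_right e3 (norm_nonneg d)
            calc ‖‖d‖ • (((t k)^2/2) • w) + ((t k * ‖d‖) - ‖u‖) • d‖
                ≤ ‖‖d‖ • (((t k)^2/2) • w)‖ + ‖((t k * ‖d‖) - ‖u‖) • d‖ := norm_add_le _ _
              _ ≤ ‖d‖ * (((t k)^2/2) * ‖w‖) + (((t k)^2/2) * ‖w‖) * ‖d‖ := by
                  rw [b1]
                  exact add_le_add le_rfl b2
              _ = (t k)^2 * ‖d‖ * ‖w‖ := by ring
          refine lhs_le.trans ?_
          have hrhs : δ * ((t k * ‖d‖ - ((t k)^2/2) * ‖w‖) * ‖d‖) ≤ δ * (‖u‖ * ‖d‖) :=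
            mul_le_mul_of_nonneg_left (mul_le_mul_of_nonneg_right e4 (norm_nonneg d)) hδ.le
          refine le_trans ?_ hrhs
          have hm := mul_le_mul_of_nonneg_left hk.le (ht k).le
          nlinarith [hm]
      filter_upwards [hn1, hn2] with k h1 h2
      rw [hyx k]
      exact ⟨h1, h2⟩
    obtain ⟨N, hN⟩ := eventually_atTop.mp hdirn
    -- closest points
    have hex : ∀ k, ∃ p ∈ F', Metric.infDist (y (k+N)) F' = dist (y (k+N)) p :=
      fun k => hF'c.exists_infDist_eq_dist hF'ne _
    choose p hpF hpd using hex
    have hinf : ∀ k, Metric.infDist (y (k+N)) F'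
        ≤ κ * ((t (k+N))^2/2 * ‖q (k+N) - z (k+N)‖) := by
      intro k
      have h1 := hsub (y (k+N)) (hN (k+N) (Nat.le_add_left N k))
      have hpk : g xb + t (k+N) • A d + ((t (k+N))^2/2) • z (k+N) ∈ Λ := hmem (k+N)
      have h2 : Metric.infDist (g (y (k+N))) Λ
          ≤ (t (k+N))^2/2 * ‖q (k+N) - z (k+N)‖ := by
        have h3 := Metric.infDist_le_dist_of_mem (x := g (y (k+N))) hpk
        refine h3.trans_eq ?_
        rw [dist_eq_norm]
        have hgq : g (y (k+N)) = g xb + t (k+N) • A d + ((t (k+N))^2/2) • q (k+N) := by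
          rw [hqd]
          rw [smul_cancel_half (htne (k+N))]
          abel
        rw [hgq, show g xb + t (k+N) • A d + ((t (k+N))^2/2) • q (k+N) -
            (g xb + t (k+N) • A d + ((t (k+N))^2/2) • z (k+N))
            = ((t (k+N))^2/2) • (q (k+N) - z (k+N)) by rw [smul_sub]; abel,
          norm_smul, Real.norm_eq_abs, abs_of_pos (div_pos (pow_pos (ht (k+N)) 2) two_pos)]
      calc Metric.infDist (y (k+N)) F' ≤ κ * Metric.infDist (g (y (k+N))) Λ := h1
        _ ≤ κ * ((t (k+N))^2/2 * ‖q (k+N) - z (k+N)‖) :=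
            mul_le_mul_of_nonneg_left h2 hκ.le
    set wk : ℕ → EuclideanSpace ℝ (Fin n) :=
      fun k => w + (2/(t (k+N))^2) • (p k - y (k+N)) with hwk
    have hwkb : ∀ k, ‖wk k - w‖ ≤ κ * ‖q (k+N) - z (k+N)‖ := by
      intro k
      have : wk k - w = (2/(t (k+N))^2) • (p k - y (k+N)) := by
        rw [hwk]; exact add_sub_cancel_left w _
      rw [this, norm_smul, Real.norm_eq_abs,
        abs_of_pos (div_pos two_pos (pow_pos (ht (k+N)) 2))]
      have hde : ‖p k - y (k+N)‖ = dist (y (k+N)) (p k) := by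
        rw [dist_eq_norm, norm_sub_rev]
      rw [hde, ← hpd k]
      calc 2/(t (k+N))^2 * Metric.infDist (y (k+N)) F'
          ≤ 2/(t (k+N))^2 * (κ * ((t (k+N))^2/2 * ‖q (k+N) - z (k+N)‖)) := by
            apply mul_le_mul_of_nonneg_left (hinf k)
            positivity
        _ = κ * ‖q (k+N) - z (k+N)‖ := by
            field_simp [htne (k+N)]
    have hqz : Tendsto (fun k => κ * ‖q (k+N) - z (k+N)‖) atTop (𝓝 0) := by
      have hsh : Tendsto (fun k : ℕ => k + N) atTop atTop := tendsto_add_atTop_nat N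
      have h1 : Tendsto (fun k => q (k+N) - z (k+N)) atTop (𝓝 ((A w + B d d) - (A w + B d d))) :=
        (hq.comp hsh).sub (hz.comp hsh)
      rw [sub_self] at h1
      have := h1.norm.const_mul κ
      simpa using this
    have hwt : Tendsto wk atTop (𝓝 w) := by
      rw [tendsto_iff_norm_sub_tendsto_zero]
      exact squeeze_zero (fun k => norm_nonneg _) hwkb hqz
    refine ⟨fun k => t (k+N), wk, fun k => ht _,
      ht0.comp (tendsto_add_atTop_nat N), hwt, fun k => ?_⟩
    have : xb + t (k+N) • d + ((t (k+N))^2/2) • wk k = p k := by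
      rw [hwk, smul_add, smul_cancel_half (htne (k+N))]
      have hyk : y (k+N) = xb + t (k+N) • d + ((t (k+N))^2/2) • w := by rw [hy]
      rw [hyk]
      abel
    rw [this]
    exact hpF k
end

section
/- Under the hypotheses that g: R^n → R^m is twice continuously differentiable, Λ closed, g(x̄) ∈ Λ, and M(x) = g(x) − Λ is metrically subregular at (x̄, 0) in direction d with modulus κ, one has for all w ∈ R^n: dist(w, T_F²(x̄;d)) ≤ κ · dist(∇g(x̄)w + ∇²g(x̄)(d,d), T_Λ²(g(x̄); ∇g(x̄)d)), where F = {x : g(x) ∈ Λ}. -/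
open Filter Topology Pointwise RealInnerProductSpace

section Aux

open Asymptotics Metric

variable {E' G' : Type*} [NormedAddCommGroup E'] [NormedSpace ℝ E']
  [NormedAddCommGroup G'] [NormedSpace ℝ G']

/-- Second order Taylor expansion with uniform quadratic error. -/
theorem aux_taylor2 (g : E' → G') (hg : ContDiff ℝ 2 g) (x : E') {ε : ℝ} (hε : 0 < ε) :
    ∃ δ > (0:ℝ), ∀ h : E', ‖h‖ < δ →
      ‖g (x + h) - g x - fderiv ℝ g x h
        - (1/2 : ℝ) • (fderiv ℝ (fderiv ℝ g) x h h)‖ ≤ ε * ‖h‖^2 := by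
  set A := fderiv ℝ g x with hA
  set B := fderiv ℝ (fderiv ℝ g) x with hBdef
  have hg1 : ContDiff ℝ 1 (fderiv ℝ g) := hg.fderiv_right (by norm_num)
  have hB : HasFDerivAt (fderiv ℝ g) B x :=
    ((hg1.differentiable (by norm_num)) x).hasFDerivAt
  have hsymm : ∀ u v : E', B u v = B v u := by
    intro u v
    exact (hg.contDiffAt.isSymmSndFDerivAt (by norm_num)).eq u v
  have hlo : (fun h => fderiv ℝ g (x + h) - A - B h) =o[𝓝 (0:E')] fun h => h := by
    have := hasFDerivAt_iff_isLittleO_nhds_zero.mp hB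
    simpa using this
  have hev : ∀ᶠ h in 𝓝 (0:E'), ‖fderiv ℝ g (x + h) - A - B h‖ ≤ ε * ‖h‖ :=
    (isLittleO_iff.mp hlo) hε
  rcases Metric.eventually_nhds_iff.mp hev with ⟨δ, hδ, hδ'⟩
  refine ⟨δ, hδ, fun h hh => ?_⟩
  set φ : E' → G' := fun h => g (x + h) - A h - (1/2 : ℝ) • (B h h) with hφ
  have hder : ∀ h' : E', HasFDerivAt φ (fderiv ℝ g (x + h') - A - B h') h' := by
    intro h'
    have h1 : HasFDerivAt (fun h : E' => g (x + h)) (fderiv ℝ g (x + h')) h' := by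
      have hgd : HasFDerivAt g (fderiv ℝ g (x + h')) (x + h') :=
        ((hg.differentiable (by norm_num)) (x + h')).hasFDerivAt
      have hid : HasFDerivAt (fun h : E' => x + h) (ContinuousLinearMap.id ℝ E') h' := by
        simpa using (hasFDerivAt_id h').const_add x
      exact hgd.comp h' hid
    have h2 : HasFDerivAt (fun h : E' => A h) (A : E' →L[ℝ] G') h' := A.hasFDerivAt
    have h3 : HasFDerivAt (fun h : E' => (1/2 : ℝ) • (B h h)) (B h') h' := by
      have happ : HasFDerivAt (fun p : (E' →L[ℝ] G') × E' => p.1 p.2)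
          ((isBoundedBilinearMap_apply (𝕜 := ℝ) (E := E') (F := G')).deriv (B h', h')) (B h', h') :=
        (isBoundedBilinearMap_apply).hasFDerivAt (B h', h')
      have hpair : HasFDerivAt (fun h : E' => ((B h : E' →L[ℝ] G'), h))
          ((B : E' →L[ℝ] (E' →L[ℝ] G')).prod (ContinuousLinearMap.id ℝ E')) h' :=
        HasFDerivAt.prodMk (B.hasFDerivAt) (hasFDerivAt_id h')
      have hq := HasFDerivAt.comp (f := fun h : E' => ((B h : E' →L[ℝ] G'), h)) h' happ hpair
      have := hq.const_smul (1/2 : ℝ)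
      have heq : HasFDerivAt (fun h : E' => (1/2 : ℝ) • (B h h))
          ((1/2 : ℝ) • (((isBoundedBilinearMap_apply (𝕜 := ℝ) (E := E') (F := G')).deriv
            (B h', h')).comp ((B : E' →L[ℝ] (E' →L[ℝ] G')).prod (ContinuousLinearMap.id ℝ E')))) h' := by
        exact this
      convert heq using 1
      ext k
      simp only [ContinuousLinearMap.smul_apply, ContinuousLinearMap.coe_comp',
        Function.comp_apply, ContinuousLinearMap.prod_apply, ContinuousLinearMap.coe_id', id_eq,
        IsBoundedBilinearMap.deriv_apply]
      rw [hsymm k h', smul_add, ← add_smul]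
      norm_num
    have := (h1.sub h2).sub h3
    exact this
  have hbound : ∀ y ∈ Metric.closedBall (0:E') ‖h‖,
      ‖fderiv ℝ g (x + y) - A - B y‖ ≤ ε * ‖h‖ := by
    intro y hy
    simp only [Metric.mem_closedBall, dist_zero_right] at hy
    calc ‖fderiv ℝ g (x + y) - A - B y‖ ≤ ε * ‖y‖ := by
            refine hδ' ?_
            simpa using lt_of_le_of_lt hy hh
      _ ≤ ε * ‖h‖ := by nlinarith [hε.le]
  have key := Convex.norm_image_sub_le_of_norm_hasFDerivWithin_le
    (f := φ) (f' := fun y => fderiv ℝ g (x + y) - A - B y) (s := Metric.closedBall (0:E') ‖h‖)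
    (x := (0:E')) (y := h)
    (fun y _ => (hder y).hasFDerivWithinAt) hbound (convex_closedBall _ _)
    (Metric.mem_closedBall_self (norm_nonneg h)) (by simp [Metric.mem_closedBall, dist_zero_right])
  have hφ0 : φ 0 = g x := by simp [hφ]
  calc ‖g (x + h) - g x - A h - (1/2:ℝ) • (B h h)‖ = ‖φ h - φ 0‖ := by
        rw [hφ0]; congr 1; simp only [hφ]; abel
    _ ≤ ε * ‖h‖ * ‖h - 0‖ := key
    _ = ε * ‖h‖^2 := by rw [sub_zero]; ring

set_option maxHeartbeats 1000000 in
theorem aux_taylor_seq (g : E' → G') (hg : ContDiff ℝ 2 g) (xb d w : E')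
    (t : ℕ → ℝ) (ht0 : ∀ k, 0 < t k) (htlim : Tendsto t atTop (𝓝 0)) :
    Tendsto (fun k => (2/(t k)^2) •
        (g (xb + t k • d + ((t k)^2/2) • w) - g xb - t k • (fderiv ℝ g xb d)))
      atTop (𝓝 (fderiv ℝ g xb w + fderiv ℝ (fderiv ℝ g) xb d d)) := by
  set A := fderiv ℝ g xb with hA
  set B := fderiv ℝ (fderiv ℝ g) xb with hB
  set h : ℕ → E' := fun k => t k • d + ((t k)^2/2) • w with hh
  set e : ℕ → E' := fun k => d + (t k / 2) • w with he
  set err : ℕ → G' := fun k => g (xb + h k) - g xb - A (h k) - (1/2 : ℝ) • (B (h k) (h k))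
    with herr
  have hte : ∀ k, h k = t k • e k := by
    intro k
    simp only [hh, he, smul_add, smul_smul]
    congr 2
    ring
  have hne : ∀ k, (t k) ≠ 0 := fun k => (ht0 k).ne'
  have hsplit : ∀ k, (2/(t k)^2) • (g (xb + h k) - g xb - t k • (A d))
      = (2/(t k)^2) • err k + (A w + B (e k) (e k)) := by
    intro k
    have hAh : A (h k) = t k • (A d) + ((t k)^2/2) • (A w) := by
      simp [hh, map_add, map_smul]
    have hBh : B (h k) (h k) = ((t k)^2) • (B (e k) (e k)) := by
      rw [hte k]
      simp only [map_smul, ContinuousLinearMap.smul_apply, smul_smul]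
      congr 1
      ring
    have : g (xb + h k) - g xb - t k • (A d)
        = err k + ((t k)^2/2) • (A w) + ((t k)^2/2) • (B (e k) (e k)) := by
      rw [herr]
      simp only [hAh, hBh, smul_smul]
      rw [show (1/2 : ℝ) * (t k)^2 = (t k)^2/2 by ring]
      abel
    rw [this]
    rw [smul_add, smul_add, smul_smul, smul_smul]
    have h1 : (2/(t k)^2) * ((t k)^2/2) = 1 := by
      field_simp
      exact div_self (hne k)
    rw [h1, one_smul, one_smul]
    abel
  have hC : (0:ℝ) < ‖d‖ + ‖w‖ + 1 := by positivity
  have claim1 : Tendsto (fun k => (2/(t k)^2) • err k) atTop (𝓝 (0:G')) := by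
    rw [NormedAddCommGroup.tendsto_nhds_zero]
    intro ε hε
    have hε0pos : 0 < ε / (4 * (‖d‖ + ‖w‖ + 1)^2) := by positivity
    obtain ⟨δ', hδ'pos, hT⟩ := aux_taylor2 g hg xb hε0pos
    have hcpos : 0 < min 1 (δ' / (‖d‖ + ‖w‖ + 1)) := by positivity
    have hev : ∀ᶠ k in atTop, t k < min 1 (δ' / (‖d‖ + ‖w‖ + 1)) :=
      htlim.eventually (Filter.Tendsto.eventually_lt_const hcpos tendsto_id)
    filter_upwards [hev] with k hk
    have htk1 : t k ≤ 1 := le_of_lt (lt_of_lt_of_le hk (min_le_left _ _))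
    have htkδ : t k < δ' / (‖d‖ + ‖w‖ + 1) := lt_of_lt_of_le hk (min_le_right _ _)
    have hhn : ‖h k‖ ≤ t k * (‖d‖ + ‖w‖ + 1) := by
      have h1 : ‖h k‖ ≤ ‖t k • d‖ + ‖((t k)^2/2) • w‖ := by rw [hh]; exact norm_add_le _ _
      rw [norm_smul, norm_smul, Real.norm_eq_abs, Real.norm_eq_abs,
        abs_of_pos (ht0 k), abs_of_pos (by have := ht0 k; positivity : (0:ℝ) < (t k)^2/2)] at h1
      have h2 : (t k)^2/2 ≤ t k := by nlinarith [ht0 k]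
      calc ‖h k‖ ≤ t k * ‖d‖ + (t k)^2/2 * ‖w‖ := h1
        _ ≤ t k * ‖d‖ + t k * ‖w‖ := by
            have := mul_le_mul_of_nonneg_right h2 (norm_nonneg w)
            linarith
        _ ≤ t k * (‖d‖ + ‖w‖ + 1) := by nlinarith [ht0 k]
    have hhδ : ‖h k‖ < δ' := by
      calc ‖h k‖ ≤ t k * (‖d‖ + ‖w‖ + 1) := hhn
        _ < (δ' / (‖d‖ + ‖w‖ + 1)) * (‖d‖ + ‖w‖ + 1) := by
            exact mul_lt_mul_of_pos_right htkδ hC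
        _ = δ' := by field_simp
    have herrb := hT (h k) hhδ
    have : ‖(2/(t k)^2) • err k‖ = (2/(t k)^2) * ‖err k‖ := by
      rw [norm_smul, Real.norm_eq_abs, abs_of_pos (by have := ht0 k; positivity)]
    rw [this]
    have hb2 : ‖err k‖ ≤ (ε / (4 * (‖d‖ + ‖w‖ + 1)^2)) * ((t k) * (‖d‖ + ‖w‖ + 1))^2 := by
      refine le_trans herrb (mul_le_mul_of_nonneg_left ?_ hε0pos.le)
      exact pow_le_pow_left₀ (norm_nonneg _) hhn 2
    calc (2/(t k)^2) * ‖err k‖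
        ≤ (2/(t k)^2) * ((ε / (4 * (‖d‖ + ‖w‖ + 1)^2)) * ((t k) * (‖d‖ + ‖w‖ + 1))^2) := by
          gcongr
      _ = ε / 2 := by
          have h3 : (‖d‖ + ‖w‖ + 1) ≠ 0 := ne_of_gt hC
          have h4 : t k ≠ 0 := hne k
          field_simp
          ring
      _ < ε := by linarith
  have he' : Tendsto e atTop (𝓝 d) := by
    have h1 := (htlim.div_const 2).smul_const w
    rw [zero_div, zero_smul] at h1
    simpa using tendsto_const_nhds.add h1
  have hBc : Continuous (fun q : E' => B q q) := by
    have h1 : Continuous (fun p : (E' →L[ℝ] G') × E' => p.1 p.2) :=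
      isBoundedBilinearMap_apply.continuous
    exact h1.comp (B.continuous.prodMk continuous_id)
  have claim2 : Tendsto (fun k => A w + B (e k) (e k)) atTop (𝓝 (A w + B d d)) :=
    tendsto_const_nhds.add ((hBc.tendsto d).comp he')
  have hcomb := claim1.add claim2
  rw [zero_add] at hcomb
  have hxh : ∀ k, xb + t k • d + ((t k)^2/2) • w = xb + h k := by
    intro k; rw [hh]; abel_nf
  have hgoal : (fun k => (2/(t k)^2) •
      (g (xb + t k • d + ((t k)^2/2) • w) - g xb - t k • (A d)))
      = fun k => (2/(t k)^2) • err k + (A w + B (e k) (e k)) := by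
    funext k
    rw [hxh k]
    exact hsplit k
  rw [show fderiv ℝ g xb d = A d from rfl, hgoal]
  exact hcomb

end Aux

section Aux2

open Metric

variable {E' G' : Type*} [NormedAddCommGroup E'] [InnerProductSpace ℝ E']
  [NormedAddCommGroup G'] [InnerProductSpace ℝ G']

theorem aux_dir_mem_eventually (ρ δ : ℝ) (hρ : 0 < ρ) (hδ : 0 < δ) (d w : E')
    (t : ℕ → ℝ) (ht0 : ∀ k, 0 < t k) (htlim : Tendsto t atTop (𝓝 0)) :
    ∀ᶠ k in atTop, t k • d + ((t k)^2/2) • w ∈ dirNbhd ρ δ d := by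
  set h : ℕ → E' := fun k => t k • d + ((t k)^2/2) • w with hh
  set e : ℕ → E' := fun k => d + (t k / 2) • w with he
  have hte : ∀ k, h k = t k • e k := by
    intro k
    simp only [hh, he, smul_add, smul_smul]
    congr 2
    ring
  have he' : Tendsto e atTop (𝓝 d) := by
    have h1 := (htlim.div_const 2).smul_const w
    rw [zero_div, zero_smul] at h1
    simpa using tendsto_const_nhds.add h1
  have hnorm : ∀ᶠ k in atTop, ‖h k‖ < ρ := by
    have h2 : Tendsto (fun k => ‖h k‖) atTop (𝓝 0) := by
      have h3 : Tendsto h atTop (𝓝 0) := by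
        have h4 : Tendsto (fun k => t k • e k) atTop (𝓝 ((0:ℝ) • d)) :=
          htlim.smul he'
        rw [zero_smul] at h4
        have := funext hte
        rw [← this] at h4
        exact h4
      simpa using h3.norm
    exact h2.eventually_lt_const hρ
  by_cases hd : d = 0
  · filter_upwards [hnorm] with k hk
    refine ⟨hk, ?_⟩
    simp [hd]
  · have hdir : ∀ᶠ k in atTop,
        ‖‖d‖ • e k - ‖e k‖ • d‖ < δ * (‖e k‖ * ‖d‖) := by
      have hcont : Continuous (fun x : E' => ‖‖d‖ • x - ‖x‖ • d‖) :=
        ((continuous_id.const_smul (‖d‖)).sub (continuous_norm.smul continuous_const)).norm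
      have hLHS : Tendsto (fun k => ‖‖d‖ • e k - ‖e k‖ • d‖) atTop (𝓝 0) := by
        have := (hcont.tendsto d).comp he'
        simpa [sub_self, Function.comp_def] using this
      have hRHS : Tendsto (fun k => δ * (‖e k‖ * ‖d‖)) atTop (𝓝 (δ * (‖d‖ * ‖d‖))) := by
        exact tendsto_const_nhds.mul ((he'.norm).mul tendsto_const_nhds)
      have hpos : (0:ℝ) < δ * (‖d‖ * ‖d‖) := by
        have := norm_pos_iff.mpr hd
        positivity
      exact hLHS.eventually_lt hRHS hpos
    filter_upwards [hnorm, hdir] with k hk1 hk2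
    refine ⟨hk1, ?_⟩
    have h5 : ‖h k‖ = t k * ‖e k‖ := by
      rw [hte k, norm_smul, Real.norm_eq_abs, abs_of_pos (ht0 k)]
    have h6 : ‖d‖ • h k - ‖h k‖ • d = t k • (‖d‖ • e k - ‖e k‖ • d) := by
      rw [h5, hte k]
      module
    rw [h6, norm_smul, Real.norm_eq_abs, abs_of_pos (ht0 k), h5]
    calc t k * ‖‖d‖ • e k - ‖e k‖ • d‖ ≤ t k * (δ * (‖e k‖ * ‖d‖)) := by
          exact mul_le_mul_of_nonneg_left hk2.le (ht0 k).le
      _ = δ * (t k * ‖e k‖ * ‖d‖) := by ring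

set_option maxHeartbeats 1000000 in
theorem aux_key_step [FiniteDimensional ℝ E'] (g : E' → G') (hg : ContDiff ℝ 2 g)
    (Λ : Set G') (hΛ : IsClosed Λ) (xb : E') (hx : g xb ∈ Λ) (d w : E')
    {κ' ρ δ : ℝ} (hκ' : 0 < κ') (hρ : 0 < ρ) (hδ : 0 < δ)
    (hsub : ∀ y : E', y - xb ∈ dirNbhd ρ δ d →
      Metric.infDist y {x | g x ∈ Λ} ≤ κ' * Metric.infDist (g y) Λ)
    (s : G') (hs : s ∈ tangentCone2 Λ (g xb) (fderiv ℝ g xb d)) :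
    ∃ w'' ∈ tangentCone2 {x | g x ∈ Λ} xb d,
      dist w w'' ≤ κ' * dist (fderiv ℝ g xb w + fderiv ℝ (fderiv ℝ g) xb d d) s := by
  haveI : ProperSpace E' := FiniteDimensional.proper ℝ E'
  obtain ⟨t, sk, ht0, htlim, hsklim, hmem⟩ := hs
  have hne : ∀ k, t k ≠ 0 := fun k => (ht0 k).ne'
  have hcancel : ∀ k, ((t k)^2/2) * (2/(t k)^2) = 1 := by
    intro k
    have h2 : ((t k)^2:ℝ) ≠ 0 := pow_ne_zero 2 (hne k)
    field_simp
    exact div_self (hne k)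
  set Fs : Set E' := {x | g x ∈ Λ} with hFs
  have hFc : IsClosed Fs := hΛ.preimage hg.continuous
  have hFne : Fs.Nonempty := ⟨xb, hx⟩
  set z : G' := fderiv ℝ g xb w + fderiv ℝ (fderiv ℝ g) xb d d with hz
  set x : ℕ → E' := fun k => xb + t k • d + ((t k)^2/2) • w with hxd
  have hT := aux_taylor_seq g hg xb d w t ht0 htlim
  set b : ℕ → ℝ :=
    fun k => ‖(2/(t k)^2) • (g (x k) - g xb - t k • (fderiv ℝ g xb d)) - sk k‖ with hbd
  have hblim : Tendsto b atTop (𝓝 (dist z s)) := by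
    have := (hT.sub hsklim).norm
    rw [dist_eq_norm]
    exact this
  have hgd : ∀ k, Metric.infDist (g (x k)) Λ ≤ ((t k)^2/2) * b k := by
    intro k
    refine le_trans (Metric.infDist_le_dist_of_mem (hmem k)) ?_
    rw [dist_eq_norm]
    have harr : g (x k) - (g xb + t k • (fderiv ℝ g xb d) + ((t k)^2/2) • sk k)
        = ((t k)^2/2) • ((2/(t k)^2) • (g (x k) - g xb - t k • (fderiv ℝ g xb d)) - sk k) := by
      rw [smul_sub, smul_smul, hcancel k, one_smul]
      abel
    rw [harr, norm_smul, Real.norm_eq_abs,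
      abs_of_pos (by have := ht0 k; positivity : (0:ℝ) < (t k)^2/2)]
  have hdirev : ∀ᶠ k in atTop, x k - xb ∈ dirNbhd ρ δ d := by
    filter_upwards [aux_dir_mem_eventually ρ δ hρ hδ d w t ht0 htlim] with k hk
    have hxx : x k - xb = t k • d + ((t k)^2/2) • w := by
      simp only [hxd, add_assoc, add_sub_cancel_left]
    rwa [hxx]
  have hsubev : ∀ᶠ k in atTop, Metric.infDist (x k) Fs ≤ κ' * (((t k)^2/2) * b k) := by
    filter_upwards [hdirev] with k hk
    exact le_trans (hsub _ hk) (mul_le_mul_of_nonneg_left (hgd k) hκ'.le)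
  choose y hy1 hy2 using fun k => hFc.exists_infDist_eq_dist hFne (x k)
  set w' : ℕ → E' := fun k => w + (2/(t k)^2) • (y k - x k) with hw'd
  have hyx : ∀ k, xb + t k • d + ((t k)^2/2) • w' k = y k := by
    intro k
    have h1 : ((t k)^2/2) • w' k = ((t k)^2/2) • w + (y k - x k) := by
      rw [hw'd]
      simp only [smul_add, smul_smul]
      rw [hcancel k, one_smul]
    have h2 : x k = xb + t k • d + ((t k)^2/2) • w := rfl
    rw [h1, h2]
    abel
  have hwb : ∀ᶠ k in atTop, ‖w' k - w‖ ≤ κ' * b k := by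
    filter_upwards [hsubev] with k hk
    have h1 : ‖w' k - w‖ = (2/(t k)^2) * dist (x k) (y k) := by
      have e1 : w' k - w = (2/(t k)^2) • (y k - x k) := by
        rw [hw'd]; exact add_sub_cancel_left _ _
      rw [e1, norm_smul, Real.norm_eq_abs,
        abs_of_pos (by have := ht0 k; positivity : (0:ℝ) < 2/(t k)^2), dist_eq_norm']
    rw [h1, ← hy2 k]
    calc (2/(t k)^2) * Metric.infDist (x k) Fs
        ≤ (2/(t k)^2) * (κ' * (((t k)^2/2) * b k)) := by
          refine mul_le_mul_of_nonneg_left hk ?_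
          have := ht0 k; positivity
      _ = (((t k)^2/2) * (2/(t k)^2)) * (κ' * b k) := by ring
      _ = κ' * b k := by rw [hcancel k, one_mul]
  have hbev : ∀ᶠ k in atTop, b k ≤ dist z s + 1 :=
    (hblim.eventually_le_const (lt_add_one _))
  obtain ⟨N, hN⟩ := eventually_atTop.mp (hwb.and hbev)
  set M : ℝ := ‖w‖ + κ' * (dist z s + 1) with hM
  have hball : ∀ k : ℕ, w' (k + N) ∈ Metric.closedBall (0:E') M := by
    intro k
    obtain ⟨h1, h2⟩ := hN (k + N) (Nat.le_add_left N k)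
    rw [Metric.mem_closedBall, dist_zero_right]
    have h3 : ‖w' (k+N)‖ ≤ ‖w‖ + ‖w' (k+N) - w‖ := by
      calc ‖w' (k+N)‖ = ‖w + (w' (k+N) - w)‖ := by congr 1; abel
        _ ≤ ‖w‖ + ‖w' (k+N) - w‖ := norm_add_le _ _
    have h4 : κ' * b (k+N) ≤ κ' * (dist z s + 1) := mul_le_mul_of_nonneg_left h2 hκ'.le
    rw [hM]
    linarith
  obtain ⟨w'', _, φ, hφmono, hφlim⟩ :=
    tendsto_subseq_of_bounded Metric.isBounded_closedBall hball
  have hφatop : Tendsto (fun k => φ k + N) atTop atTop :=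
    tendsto_atTop_mono (fun k => Nat.le_add_right (φ k) N) hφmono.tendsto_atTop
  have hmem2 : w'' ∈ tangentCone2 Fs xb d := by
    refine ⟨fun k => t (φ k + N), fun k => w' (φ k + N), fun k => ht0 _,
      htlim.comp hφatop, hφlim, fun k => ?_⟩
    rw [hyx (φ k + N)]
    exact hy1 _
  have hdist : dist w w'' ≤ κ' * dist z s := by
    have h1 : Tendsto (fun k => dist w (w' (φ k + N))) atTop (𝓝 (dist w w'')) :=
      tendsto_const_nhds.dist hφlim
    have h2 : Tendsto (fun k => κ' * b (φ k + N)) atTop (𝓝 (κ' * dist z s)) :=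
      tendsto_const_nhds.mul (hblim.comp hφatop)
    refine le_of_tendsto_of_tendsto' h1 h2 (fun k => ?_)
    have := (hN (φ k + N) (Nat.le_add_left N _)).1
    rw [dist_eq_norm, norm_sub_rev]
    exact this
  exact ⟨w'', hmem2, hdist⟩

end Aux2

theorem stmt_8 {n m : ℕ} (g : EuclideanSpace ℝ (Fin n) → EuclideanSpace ℝ (Fin m))
    (hg : ContDiff ℝ 2 g) (Λ : Set (EuclideanSpace ℝ (Fin m))) (hΛ : IsClosed Λ)
    (xb : EuclideanSpace ℝ (Fin n)) (hx : g xb ∈ Λ)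
    (d : EuclideanSpace ℝ (Fin n)) (κ : ℝ) (hκ : 0 ≤ κ)
    (hM : dirMetrSubregMod g Λ xb d κ) :
    ∀ w : EuclideanSpace ℝ (Fin n),
      EMetric.infEdist w (tangentCone2 {x | g x ∈ Λ} xb d) ≤
        ENNReal.ofReal κ *
          EMetric.infEdist (fderiv ℝ g xb w + iteratedFDeriv ℝ 2 g xb ![d, d])
            (tangentCone2 Λ (g xb) (fderiv ℝ g xb d)) := by
  intro w
  classical
  have hiter : iteratedFDeriv ℝ 2 g xb ![d, d] = fderiv ℝ (fderiv ℝ g) xb d d := by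
    rw [iteratedFDeriv_two_apply]
    simp
  rw [hiter]
  set z := fderiv ℝ g xb w + fderiv ℝ (fderiv ℝ g) xb d d with hzd
  set SL := tangentCone2 Λ (g xb) (fderiv ℝ g xb d) with hSL
  set SF := tangentCone2 {x | g x ∈ Λ} xb d with hSFd
  have hFc : IsClosed {x : EuclideanSpace ℝ (Fin n) | g x ∈ Λ} := hΛ.preimage hg.continuous
  have hFne : ({x : EuclideanSpace ℝ (Fin n) | g x ∈ Λ}).Nonempty := ⟨xb, hx⟩
  rcases eq_or_lt_of_le hκ with hκ0 | hκpos
  · -- κ = 0 : then a directional neighborhood is contained in the feasible set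
    have hwSF : w ∈ SF := by
      obtain ⟨K, tset, htset, hlip⟩ :=
        ((hg.contDiffAt (x := xb)).of_le (by norm_num : (1 : WithTop ℕ∞) ≤ 2)).exists_lipschitzOnWith
      obtain ⟨r, hr, hrball⟩ := Metric.mem_nhds_iff.mp htset
      have hκ'pos : (0:ℝ) < 1/(2*((K:ℝ)+1)) := by positivity
      obtain ⟨ρ, hρ, δ, hδ, hsub⟩ := hM (1/(2*((K:ℝ)+1))) (by rw [← hκ0]; exact hκ'pos)
      have hρ₀ : (0:ℝ) < min ρ (r/4) := lt_min hρ (by positivity)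
      have hclaim : ∀ y : EuclideanSpace ℝ (Fin n),
          y - xb ∈ dirNbhd (min ρ (r/4)) δ d → g y ∈ Λ := by
        intro y hy
        have hy1 : y - xb ∈ dirNbhd ρ δ d := ⟨lt_of_lt_of_le hy.1 (min_le_left _ _), hy.2⟩
        have hn4 : ‖y - xb‖ < r/4 := lt_of_lt_of_le hy.1 (min_le_right _ _)
        have h0 : Metric.infDist y {x | g x ∈ Λ} ≤ ‖y - xb‖ := by
          have := Metric.infDist_le_dist_of_mem (x := y)
            (show xb ∈ {x : EuclideanSpace ℝ (Fin n) | g x ∈ Λ} from hx)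
          rwa [dist_eq_norm] at this
        obtain ⟨p, hp1, hp2⟩ := hFc.exists_infDist_eq_dist hFne y
        have hpd : dist y p ≤ ‖y - xb‖ := by rw [← hp2]; exact h0
        have hyb : y ∈ Metric.ball xb r := by
          rw [Metric.mem_ball, dist_eq_norm]; linarith
        have hpb : p ∈ Metric.ball xb r := by
          rw [Metric.mem_ball]
          calc dist p xb ≤ dist p y + dist y xb := dist_triangle _ _ _
            _ < r := by rw [dist_comm p y, dist_eq_norm y xb]; linarith
        have hgp : Metric.infDist (g y) Λ ≤ (K:ℝ) * dist y p :=
          le_trans (Metric.infDist_le_dist_of_mem hp1)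
            (hlip.dist_le_mul y (hrball hyb) p (hrball hpb))
        have hky := hsub y hy1
        have ha : (0:ℝ) ≤ Metric.infDist y {x : EuclideanSpace ℝ (Fin n) | g x ∈ Λ} :=
          Metric.infDist_nonneg
        have hKnn : (0:ℝ) ≤ (K:ℝ) := K.coe_nonneg
        have hdyp : dist y p = Metric.infDist y {x : EuclideanSpace ℝ (Fin n) | g x ∈ Λ} :=
          hp2.symm
        have h6 : Metric.infDist y {x : EuclideanSpace ℝ (Fin n) | g x ∈ Λ}
            ≤ (1/(2*((K:ℝ)+1))) * ((K:ℝ) * Metric.infDist y {x : EuclideanSpace ℝ (Fin n) | g x ∈ Λ}) := by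
          refine le_trans hky (mul_le_mul_of_nonneg_left ?_ hκ'pos.le)
          rw [← hdyp]
          exact hgp
        have hKb : (K:ℝ)/(2*((K:ℝ)+1)) ≤ 1/2 := by
          rw [div_le_div_iff₀ (by positivity) (by norm_num)]
          linarith
        have h8 : (1/(2*((K:ℝ)+1))) * ((K:ℝ) * Metric.infDist y {x : EuclideanSpace ℝ (Fin n) | g x ∈ Λ})
            ≤ (1/2) * Metric.infDist y {x : EuclideanSpace ℝ (Fin n) | g x ∈ Λ} := by
          rw [show (1/(2*((K:ℝ)+1))) * ((K:ℝ) * Metric.infDist y {x : EuclideanSpace ℝ (Fin n) | g x ∈ Λ})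
              = ((K:ℝ)/(2*((K:ℝ)+1))) * Metric.infDist y {x : EuclideanSpace ℝ (Fin n) | g x ∈ Λ} from by ring]
          exact mul_le_mul_of_nonneg_right hKb ha
        have h7 : Metric.infDist y {x : EuclideanSpace ℝ (Fin n) | g x ∈ Λ} = 0 := by
          have : Metric.infDist y {x : EuclideanSpace ℝ (Fin n) | g x ∈ Λ} ≤ 0 := by linarith
          linarith
        have := (hFc.mem_iff_infDist_zero hFne).mpr h7
        exact this
      set t0 : ℕ → ℝ := fun k : ℕ => 1/((k:ℝ)+1) with ht0d
      have hev := aux_dir_mem_eventually (min ρ (r/4)) δ hρ₀ hδ d w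
        t0 (fun k => by simp only [ht0d]; positivity)
        tendsto_one_div_add_atTop_nhds_zero_nat
      obtain ⟨N, hN⟩ := eventually_atTop.mp hev
      refine ⟨fun k => t0 (k+N), fun _ => w,
        fun k => by simp only [ht0d]; positivity, ?_, tendsto_const_nhds, fun k => ?_⟩
      · exact tendsto_one_div_add_atTop_nhds_zero_nat.comp (Filter.tendsto_add_atTop_nat N)
      · show xb + t0 (k+N) • d + ((t0 (k+N))^2/2) • w ∈ {x | g x ∈ Λ}
        have h9 := hN (k+N) (Nat.le_add_left N k)
        have harr : xb + t0 (k+N) • d + ((t0 (k+N))^2/2) • w - xb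
            = t0 (k+N) • d + ((t0 (k+N))^2/2) • w := by abel
        exact hclaim _ (by rw [harr]; exact h9)
    calc EMetric.infEdist w SF = 0 := EMetric.infEdist_zero_of_mem hwSF
      _ ≤ _ := by simp
  · -- κ > 0
    by_cases hSLne : SL.Nonempty
    · have hkey : ∀ ε > (0:ℝ),
          Metric.infDist w SF ≤ (κ+ε) * (Metric.infDist z SL + ε) := by
        intro ε hε
        obtain ⟨s, hsmem, hsd⟩ := (Metric.infDist_lt_iff hSLne).mp
          (lt_add_of_pos_right (Metric.infDist z SL) hε)
        obtain ⟨ρ, hρ, δ, hδ, hsub⟩ := hM (κ+ε) (lt_add_of_pos_right κ hε)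
        obtain ⟨w'', hw''mem, hw''d⟩ := aux_key_step g hg Λ hΛ xb hx d w
          (by positivity : (0:ℝ) < κ+ε) hρ hδ hsub s hsmem
        calc Metric.infDist w SF ≤ dist w w'' := Metric.infDist_le_dist_of_mem hw''mem
          _ ≤ (κ+ε) * dist z s := hw''d
          _ ≤ (κ+ε) * (Metric.infDist z SL + ε) := by
              refine mul_le_mul_of_nonneg_left hsd.le ?_
              positivity
      have hSFne : SF.Nonempty := by
        obtain ⟨s, hsmem⟩ := hSLne
        obtain ⟨ρ, hρ, δ, hδ, hsub⟩ := hM (κ+1) (lt_add_one κ)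
        obtain ⟨w'', hw''mem, _⟩ := aux_key_step g hg Λ hΛ xb hx d w
          (by positivity : (0:ℝ) < κ+1) hρ hδ hsub s hsmem
        exact ⟨w'', hw''mem⟩
      have hlim : Metric.infDist w SF ≤ κ * Metric.infDist z SL := by
        have hc : Tendsto (fun ε : ℝ => (κ+ε) * (Metric.infDist z SL + ε)) (𝓝[>] 0)
            (𝓝 (κ * Metric.infDist z SL)) := by
          have h1 : Tendsto (fun ε : ℝ => (κ+ε) * (Metric.infDist z SL + ε)) (𝓝 0)
              (𝓝 ((κ+0) * (Metric.infDist z SL + 0))) :=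
            Tendsto.mul (tendsto_const_nhds.add tendsto_id)
              (tendsto_const_nhds.add tendsto_id)
          rw [add_zero, add_zero] at h1
          exact h1.mono_left nhdsWithin_le_nhds
        refine ge_of_tendsto hc ?_
        filter_upwards [self_mem_nhdsWithin] with ε hε
        exact hkey ε hε
      calc EMetric.infEdist w SF = ENNReal.ofReal (Metric.infDist w SF) :=
            (ENNReal.ofReal_toReal (Metric.infEdist_ne_top hSFne)).symm
        _ ≤ ENNReal.ofReal (κ * Metric.infDist z SL) := ENNReal.ofReal_le_ofReal hlim
        _ = ENNReal.ofReal κ * ENNReal.ofReal (Metric.infDist z SL) := ENNReal.ofReal_mul hκ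
        _ ≤ ENNReal.ofReal κ * EMetric.infEdist z SL :=
            mul_le_mul_right ENNReal.ofReal_toReal_le _
    · rw [Set.not_nonempty_iff_eq_empty] at hSLne
      rw [hSLne]
      show _ ≤ _ * Metric.infEDist z ∅
      rw [Metric.infEDist_empty,
        ENNReal.mul_top (by simpa [ENNReal.ofReal_eq_zero] using hκpos : ENNReal.ofReal κ ≠ 0)]
      exact le_top
end

section
/- Let g be twice continuously differentiable, Λ closed, g(x̄) ∈ Λ, ∇g(x̄)d ∈ T_Λ(g(x̄)), and suppose M(x) = g(x) − Λ is metrically subregular at (x̄, 0) in direction d. Then the second-order tangent set T_F²(x̄; d) to the feasible set F = {x : g(x) ∈ Λ} is nonempty if and only if T_Λ²(g(x̄); ∇g(x̄)d) is nonempty. -/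
open Filter Topology Pointwise RealInnerProductSpace

section Helpers

lemma taylor_quad {E F : Type*} [NormedAddCommGroup E] [NormedSpace ℝ E]
    [NormedAddCommGroup F] [NormedSpace ℝ F]
    (g : E → F) (hg : ContDiff ℝ 2 g) (x : E) :
    ∃ K : ℝ, 0 ≤ K ∧ ∃ r > (0:ℝ), ∀ y : E, ‖y - x‖ ≤ r →
      ‖g y - g x - fderiv ℝ g x (y - x)‖ ≤ K * ‖y - x‖^2 := by
  have h1 : ContDiff ℝ 1 (fderiv ℝ g) := hg.fderiv_right (by norm_num)
  obtain ⟨K, t, ht, hlip⟩ := h1.contDiffAt.exists_lipschitzOnWith (x := x)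
  obtain ⟨r, hr, hball⟩ := Metric.nhds_basis_closedBall.mem_iff.mp ht
  refine ⟨K, K.coe_nonneg, r, hr, fun y hy => ?_⟩
  set s := Metric.closedBall x ‖y - x‖ with hs
  have hxs : x ∈ s := Metric.mem_closedBall_self (norm_nonneg _)
  have hys : y ∈ s := by simp [hs, Metric.mem_closedBall, dist_eq_norm]
  have hsub : s ⊆ t := fun z hz => hball (Metric.closedBall_subset_closedBall hy hz)
  have hder : ∀ z ∈ s, HasFDerivWithinAt g (fderiv ℝ g z) s z := fun z _ =>
    ((hg.differentiable (by norm_num)).differentiableAt.hasFDerivAt).hasFDerivWithinAt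
  have hbound : ∀ z ∈ s, ‖fderiv ℝ g z - fderiv ℝ g x‖ ≤ K * ‖y - x‖ := by
    intro z hz
    have h2 := hlip.dist_le_mul z (hsub hz) x (hsub hxs)
    rw [dist_eq_norm] at h2
    refine h2.trans ?_
    have : dist z x ≤ ‖y - x‖ := hz
    nlinarith [K.coe_nonneg]
  have := (convex_closedBall x ‖y-x‖).norm_image_sub_le_of_norm_hasFDerivWithin_le'
    hder hbound hxs hys
  calc ‖g y - g x - (fderiv ℝ g x) (y - x)‖ ≤ K * ‖y - x‖ * ‖y - x‖ := this
    _ = K * ‖y - x‖^2 := by ring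

lemma subseq_aux {m : ℕ} (S : Set (EuclideanSpace ℝ (Fin m))) (x d : EuclideanSpace ℝ (Fin m))
    (t : ℕ → ℝ) (v : ℕ → EuclideanSpace ℝ (Fin m)) (R : ℝ)
    (ht : ∀ k, 0 < t k) (ht0 : Tendsto t atTop (𝓝 0))
    (hb : ∀ k, ‖v k‖ ≤ R)
    (hmem : ∀ k, x + t k • d + ((t k)^2/2) • v k ∈ S) :
    (tangentCone2 S x d).Nonempty := by
  obtain ⟨a, -, φ, hφ, hconv⟩ := tendsto_subseq_of_bounded
    (Metric.isBounded_closedBall (x := (0:EuclideanSpace ℝ (Fin m))) (r := R))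
    (x := v) (fun k => by simpa [Metric.mem_closedBall, dist_zero_right] using hb k)
  exact ⟨a, t ∘ φ, v ∘ φ, fun k => ht _, ht0.comp hφ.tendsto_atTop, hconv, fun k => hmem _⟩

end Helpers


set_option maxHeartbeats 1000000 in
theorem stmt_9 {n m : ℕ} (g : EuclideanSpace ℝ (Fin n) → EuclideanSpace ℝ (Fin m))
    (hg : ContDiff ℝ 2 g) (Λ : Set (EuclideanSpace ℝ (Fin m))) (hΛ : IsClosed Λ)
    (xb : EuclideanSpace ℝ (Fin n)) (hx : g xb ∈ Λ)
    (d : EuclideanSpace ℝ (Fin n)) (hd : fderiv ℝ g xb d ∈ tangentCone' Λ (g xb))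
    (hM : dirMetrSubreg g Λ xb d) :
    (tangentCone2 {x | g x ∈ Λ} xb d).Nonempty ↔
      (tangentCone2 Λ (g xb) (fderiv ℝ g xb d)).Nonempty := by
  constructor
  · rintro ⟨w, t, v, ht, ht0, hvw, hmem⟩
    obtain ⟨K, hK0, r, hr, htay⟩ := taylor_quad g hg xb
    set Dg := fderiv ℝ g xb with hDgdef
    set xk : ℕ → EuclideanSpace ℝ (Fin n) :=
      fun k => xb + t k • d + ((t k)^2/2) • v k with hxkdef
    set v' : ℕ → EuclideanSpace ℝ (Fin m) :=
      fun k => (2/(t k)^2) • (g (xk k) - g xb - t k • Dg d) with hv'def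
    have hxksub : ∀ k, xk k - xb = t k • d + ((t k)^2/2) • v k := by
      intro k; rw [hxkdef]; simp only [add_assoc, add_sub_cancel_left]
    have hh0 : Tendsto (fun k => xk k - xb) atTop (𝓝 0) := by
      have h1 : Tendsto (fun k => t k • d) atTop (𝓝 ((0:ℝ) • d)) := ht0.smul_const d
      have h2 : Tendsto (fun k => ((t k)^2/2) • v k) atTop (𝓝 (((0:ℝ)^2/2) • w)) :=
        ((ht0.pow 2).div_const 2).smul hvw
      have := h1.add h2
      simp only [zero_smul, add_zero, zero_pow, ne_eq, OfNat.ofNat_ne_zero,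
        not_false_eq_true, zero_div] at this
      simpa only [hxksub] using this
    have hEv : ∀ᶠ k in atTop, ‖xk k - xb‖ ≤ r ∧ ‖v k‖ ≤ ‖w‖ + 1 ∧ t k ≤ 1 := by
      have e1 : ∀ᶠ k in atTop, ‖xk k - xb‖ ≤ r :=
        (hh0.norm).eventually (eventually_le_nhds (by simpa using hr))
      have e2 : ∀ᶠ k in atTop, ‖v k‖ ≤ ‖w‖ + 1 :=
        (hvw.norm).eventually (eventually_le_nhds (lt_add_one ‖w‖))
      have e3 : ∀ᶠ k in atTop, t k ≤ 1 :=
        ht0.eventually (eventually_le_nhds one_pos)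
      filter_upwards [e1, e2, e3] with k h1 h2 h3 using ⟨h1, h2, h3⟩
    obtain ⟨N, hN⟩ := eventually_atTop.mp hEv
    have hDlin : ∀ k, Dg (xk k - xb) = t k • Dg d + ((t k)^2/2) • Dg (v k) := by
      intro k; rw [hxksub, map_add, map_smul, map_smul]
    have hinv : ∀ k, (2/(t k)^2) * ((t k)^2/2) = 1 := by
      intro k; have := (ht k).ne'; field_simp
    have hid : ∀ k, v' k = (2/(t k)^2) • (g (xk k) - g xb - Dg (xk k - xb)) + Dg (v k) := by
      intro k
      show (2/(t k)^2) • (g (xk k) - g xb - t k • Dg d) = _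
      rw [show g (xk k) - g xb - t k • Dg d
          = (g (xk k) - g xb - Dg (xk k - xb)) + ((t k)^2/2) • Dg (v k) by
        rw [hDlin]; abel]
      rw [smul_add, smul_smul, hinv, one_smul]
    have hmemΛ : ∀ k, g xb + t k • Dg d + ((t k)^2/2) • v' k ∈ Λ := by
      intro k
      have h5 : ((t k)^2/2) • v' k = g (xk k) - g xb - t k • Dg d := by
        show ((t k)^2/2) • ((2/(t k)^2) • (g (xk k) - g xb - t k • Dg d)) = _
        rw [smul_smul, mul_comm ((t k)^2/2), hinv, one_smul]
      have h6 : g xb + t k • Dg d + (g (xk k) - g xb - t k • Dg d) = g (xk k) := by abel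
      rw [h5, h6]
      exact hmem k
    -- bound
    set R : ℝ := 2*K*(‖d‖+‖w‖+1)^2 + ‖Dg‖*(‖w‖+1) with hRdef
    have hbd : ∀ k, N ≤ k → ‖v' k‖ ≤ R := by
      intro k hk
      obtain ⟨h1, h2, h3⟩ := hN k hk
      have htk := ht k
      have hhk : ‖xk k - xb‖ ≤ t k * (‖d‖ + ‖w‖ + 1) := by
        rw [hxksub]
        refine (norm_add_le _ _).trans ?_
        rw [norm_smul, norm_smul, Real.norm_eq_abs, Real.norm_eq_abs,
          abs_of_pos htk, abs_of_pos (by positivity : (0:ℝ) < (t k)^2/2)]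
        have ha : (t k)^2/2 ≤ t k := by nlinarith
        have hb : ((t k)^2/2) * ‖v k‖ ≤ t k * (‖w‖+1) :=
          mul_le_mul ha h2 (norm_nonneg _) htk.le
        nlinarith [hb]
      have herr : ‖g (xk k) - g xb - Dg (xk k - xb)‖ ≤ K * (t k * (‖d‖ + ‖w‖ + 1))^2 := by
        refine (htay (xk k) h1).trans ?_
        exact mul_le_mul_of_nonneg_left
          (pow_le_pow_left₀ (norm_nonneg _) hhk 2) hK0
      rw [hid k]
      refine (norm_add_le _ _).trans ?_
      have hop : ‖Dg (v k)‖ ≤ ‖Dg‖ * ‖v k‖ := Dg.le_opNorm (v k)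
      have h6 : ‖(2/(t k)^2) • (g (xk k) - g xb - Dg (xk k - xb))‖
          ≤ (2/(t k)^2) * (K * (t k * (‖d‖ + ‖w‖ + 1))^2) := by
        rw [norm_smul, Real.norm_eq_abs, abs_of_pos (by positivity)]
        exact mul_le_mul_of_nonneg_left herr (by positivity)
      have h7 : (2/(t k)^2) * (K * (t k * (‖d‖ + ‖w‖ + 1))^2)
          = 2*K*(‖d‖+‖w‖+1)^2 := by
        have htne : t k ≠ 0 := (ht k).ne'
        field_simp
      have h8 : ‖Dg‖ * ‖v k‖ ≤ ‖Dg‖ * (‖w‖+1) :=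
        mul_le_mul_of_nonneg_left h2 (norm_nonneg _)
      rw [hRdef]
      have h9 := add_le_add h6 (hop.trans h8)
      rw [h7] at h9
      exact h9
    exact subseq_aux Λ (g xb) (Dg d) (fun k => t (k+N)) (fun k => v' (k+N)) R
      (fun k => ht _) (ht0.comp (tendsto_add_atTop_nat N))
      (fun k => hbd _ (Nat.le_add_left N k)) (fun k => hmemΛ _)
  · rintro ⟨w, t, v, ht, ht0, hvw, hmem⟩
    obtain ⟨K, hK0, r, hr, htay⟩ := taylor_quad g hg xb
    obtain ⟨κ, hκ, ρ, hρ, δ, hδ, hsub⟩ := hM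
    set Dg := fderiv ℝ g xb with hDgdef
    set Fs : Set (EuclideanSpace ℝ (Fin n)) := {x | g x ∈ Λ} with hFsdef
    have hFne : Fs.Nonempty := ⟨xb, hx⟩
    set C : ℝ := K * ‖d‖^2 + (‖w‖+1)/2 with hCdef
    have hC0 : 0 ≤ C := by positivity
    have hEv : ∀ᶠ k in atTop, t k * ‖d‖ ≤ r ∧ t k * ‖d‖ < ρ ∧ ‖v k‖ ≤ ‖w‖ + 1 := by
      have e1 : ∀ᶠ k in atTop, t k * ‖d‖ ≤ r := by
        have := ht0.mul_const ‖d‖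
        rw [zero_mul] at this
        exact this.eventually (eventually_le_nhds hr)
      have e2 : ∀ᶠ k in atTop, t k * ‖d‖ < ρ := by
        have := ht0.mul_const ‖d‖
        rw [zero_mul] at this
        exact this.eventually (eventually_lt_nhds hρ)
      have e3 : ∀ᶠ k in atTop, ‖v k‖ ≤ ‖w‖ + 1 :=
        (hvw.norm).eventually (eventually_le_nhds (lt_add_one ‖w‖))
      filter_upwards [e1, e2, e3] with k h1 h2 h3 using ⟨h1, h2, h3⟩
    obtain ⟨N, hN⟩ := eventually_atTop.mp hEv
    have hch : ∀ k : ℕ, ∃ z ∈ Fs, dist (xb + t (k+N) • d) z < (κ*C+1) * (t (k+N))^2 := by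
      intro k
      obtain ⟨h1, h2, h3⟩ := hN (k+N) (Nat.le_add_left N k)
      set s := t (k+N) with hsdef
      have hs0 : 0 < s := ht (k+N)
      have hnorm : ‖(xb + s • d) - xb‖ = s * ‖d‖ := by
        rw [add_sub_cancel_left, norm_smul, Real.norm_eq_abs, abs_of_pos hs0]
      have h1' : ‖(xb + s • d) - xb‖ ≤ r := by rw [hnorm]; exact h1
      have hdist : Metric.infDist (g (xb + s • d)) Λ ≤ C * s^2 := by
        have hz : g xb + s • Dg d + (s^2/2) • v (k+N) ∈ Λ := hmem (k+N)
        refine (Metric.infDist_le_dist_of_mem hz).trans ?_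
        rw [dist_eq_norm]
        have hDeq : Dg ((xb + s • d) - xb) = s • Dg d := by
          rw [add_sub_cancel_left, map_smul]
        have heq : g (xb + s•d) - (g xb + s • Dg d + (s^2/2) • v (k+N))
            = (g (xb+s•d) - g xb - Dg ((xb+s•d) - xb)) - (s^2/2) • v (k+N) := by
          rw [hDeq]; abel
        rw [heq]
        have herr := htay (xb + s•d) h1'
        rw [hnorm] at herr
        refine (norm_sub_le _ _).trans ?_
        have hvn : ‖(s^2/2) • v (k+N)‖ ≤ (s^2/2) * (‖w‖+1) := by
          rw [norm_smul, Real.norm_eq_abs, abs_of_pos (by positivity)]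
          exact mul_le_mul_of_nonneg_left h3 (by positivity)
        rw [hCdef]
        nlinarith [norm_nonneg d]
      have hdn : (xb + s • d) - xb ∈ dirNbhd ρ δ d := by
        rw [add_sub_cancel_left]
        constructor
        · rw [norm_smul, Real.norm_eq_abs, abs_of_pos hs0]; exact h2
        · have : ‖d‖ • (s • d) - ‖s • d‖ • d = 0 := by
            rw [norm_smul, Real.norm_eq_abs, abs_of_pos hs0, smul_smul, mul_comm ‖d‖ s,
              mul_smul]
            abel
          rw [this, norm_zero]
          positivity
      have h4 : Metric.infDist (xb + s • d) Fs < (κ*C+1) * s^2 := by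
        refine lt_of_le_of_lt (hsub _ hdn) ?_
        have h5 : κ * Metric.infDist (g (xb + s • d)) Λ ≤ κ * (C * s^2) :=
          mul_le_mul_of_nonneg_left hdist (le_of_lt hκ)
        nlinarith [sq_nonneg s, hs0]
      exact (Metric.infDist_lt_iff hFne).mp h4
    choose z hzF hzd using hch
    set w' : ℕ → EuclideanSpace ℝ (Fin n) :=
      fun k => (2/(t (k+N))^2) • (z k - (xb + t (k+N) • d)) with hw'def
    have hinv : ∀ k : ℕ, ((t (k+N))^2/2) * (2/(t (k+N))^2) = 1 := by
      intro k; have := (ht (k+N)).ne'; field_simp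
    refine subseq_aux Fs xb d (fun k => t (k+N)) w' (2*(κ*C+1))
      (fun k => ht _) (ht0.comp (tendsto_add_atTop_nat N)) ?_ ?_
    · intro k
      have hs0 := ht (k+N)
      have hd := hzd k
      rw [dist_eq_norm, norm_sub_rev] at hd
      show ‖(2/(t (k+N))^2) • (z k - (xb + t (k+N) • d))‖ ≤ _
      rw [norm_smul, Real.norm_eq_abs, abs_of_pos (by positivity : (0:ℝ) < 2/(t (k+N))^2)]
      have h5 : 2/(t (k+N))^2 * ‖z k - (xb + t (k+N) • d)‖
          ≤ 2/(t (k+N))^2 * ((κ*C+1) * (t (k+N))^2) :=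
        mul_le_mul_of_nonneg_left (le_of_lt hd) (by positivity)
      refine h5.trans (le_of_eq ?_)
      field_simp
    · intro k
      have h6 : ((t (k+N))^2/2) • w' k = z k - (xb + t (k+N) • d) := by
        show ((t (k+N))^2/2) • ((2/(t (k+N))^2) • (z k - (xb + t (k+N) • d))) = _
        rw [smul_smul, hinv, one_smul]
      rw [show xb + t (k+N) • d + ((t (k+N))^2/2) • w' k
          = (xb + t (k+N) • d) + ((t (k+N))^2/2) • w' k from rfl, h6,
        add_sub_cancel]
      exact hzF k
end

section
/- For every nonempty closed set S ⊆ R^n and every λ ∈ R^n, the lower generalized support function satisfies σ̂_S(λ) ≤ σ_S(λ), where σ_S is the usual support function. -/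
open Filter Topology Pointwise RealInnerProductSpace

set_option maxHeartbeats 1000000

theorem stmt_11 {n : ℕ} (S : Set (EuclideanSpace ℝ (Fin n))) (hS : IsClosed S)
    (hne : S.Nonempty) (l : EuclideanSpace ℝ (Fin n)) :
    sigmaHat S l ≤ suppFn S l := by
  by_cases htop : suppFn S l = ⊤
  · rw [htop]; exact le_top
  obtain ⟨u₀', hu₀'⟩ := hne
  have hbot : suppFn S l ≠ ⊥ := by
    intro h
    have h1 : ((⟪l, u₀'⟫ : ℝ) : EReal) ≤ suppFn S l := le_sSup ⟨u₀', hu₀', rfl⟩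
    rw [h, le_bot_iff] at h1
    exact EReal.coe_ne_bot _ h1
  set m : ℝ := (suppFn S l).toReal with hm
  have hMm : suppFn S l = (m : EReal) := (EReal.coe_toReal htop hbot).symm
  have hub : ∀ u ∈ S, ⟪l, u⟫ ≤ m := by
    intro u hu
    have h1 : ((⟪l, u⟫ : ℝ) : EReal) ≤ (m : EReal) := hMm ▸ le_sSup ⟨u, hu, rfl⟩
    exact_mod_cast h1
  rw [hMm, sigmaHat]
  refine le_of_forall_gt_imp_ge_of_dense ?_
  intro c hc
  induction c with
  | top => exact le_top
  | bot => exact absurd hc (by simp)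
  | coe b =>
    have hmb : m < b := by exact_mod_cast hc
    refine liminf_le_of_frequently_le' (frequently_iff.mpr ?_)
    intro U hU
    obtain ⟨ε₀, hε₀, hball⟩ := Metric.mem_nhds_iff.mp hU
    set δ : ℝ := (b - m) / 4 with hδdef
    have hδ : 0 < δ := by simp only [hδdef]; linarith
    -- near maximizer u₀
    have hlt : ((m - δ : ℝ) : EReal) < suppFn S l := by
      rw [hMm]; exact_mod_cast (by linarith : m - δ < m)
    obtain ⟨z, ⟨u₀, hu₀S, rfl⟩, hzlt⟩ := lt_sSup_iff.mp hlt
    have hzlt' : ((m - δ : ℝ) : EReal) < ((⟪l, u₀⟫ : ℝ) : EReal) := hzlt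
    have hu₀ : m - δ < ⟪l, u₀⟫ := by exact_mod_cast hzlt'
    set N : ℝ := ‖u₀‖ with hN
    have hN0 : 0 ≤ N := norm_nonneg _
    set r : ℝ := max (4 * δ / ε₀ ^ 2) (2 * (N + 1) ^ 2 / δ) with hrdef
    have hr : 0 < r := lt_max_of_lt_left (by positivity)
    have hrε : 4 * δ ≤ ε₀ ^ 2 * r := by
      have h1 : 4 * δ / ε₀ ^ 2 ≤ r := le_max_left _ _
      rw [div_le_iff₀ (by positivity)] at h1
      linarith
    have hrδ : 2 * (N + 1) ^ 2 ≤ δ * r := by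
      have h1 : 2 * (N + 1) ^ 2 / δ ≤ r := le_max_right _ _
      rw [div_le_iff₀ hδ] at h1
      linarith
    set x := u₀ + r • l with hx
    obtain ⟨ub, hubS, hubd⟩ := hS.exists_infDist_eq_dist ⟨u₀, hu₀S⟩ x
    have hmin : ∀ u ∈ S, dist x ub ≤ dist x u := fun u hu =>
      hubd ▸ Metric.infDist_le_dist_of_mem hu
    set e := ub - u₀ with he
    have hxub : x - ub = r • l - e := by rw [hx, he]; abel
    -- proximal normal inequality
    have h1 : ∀ y ∈ S, ⟪x - ub, y - ub⟫ ≤ ‖y - ub‖ ^ 2 / 2 := by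
      intro y hy
      have hd := hmin y hy
      rw [dist_eq_norm, dist_eq_norm] at hd
      have hsq : ‖x - ub‖ ^ 2 ≤ ‖x - y‖ ^ 2 := by
        have := norm_nonneg (x - ub); nlinarith
      have hxy : x - y = (x - ub) - (y - ub) := by abel
      have hexp : ‖(x - ub) - (y - ub)‖ ^ 2 =
          ‖x - ub‖ ^ 2 - 2 * ⟪x - ub, y - ub⟫ + ‖y - ub‖ ^ 2 := norm_sub_sq_real _ _
      rw [hxy, hexp] at hsq
      linarith
    -- key estimate ‖e‖² ≤ 2 r δ
    have he2 : ‖e‖ ^ 2 ≤ 2 * r * δ := by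
      have hd := hmin u₀ hu₀S
      rw [dist_eq_norm, dist_eq_norm] at hd
      have hsq : ‖x - ub‖ ^ 2 ≤ ‖x - u₀‖ ^ 2 := by
        have := norm_nonneg (x - ub); nlinarith
      have hxu₀ : x - u₀ = r • l := by rw [hx]; abel
      have hexp : ‖r • l - e‖ ^ 2 = ‖r • l‖ ^ 2 - 2 * ⟪r • l, e⟫ + ‖e‖ ^ 2 :=
        norm_sub_sq_real _ _
      rw [hxub, hxu₀, hexp] at hsq
      have hin : ⟪r • l, e⟫ = r * (⟪l, ub⟫ - ⟪l, u₀⟫) := by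
        rw [real_inner_smul_left, he, inner_sub_right]
      have hubm : ⟪l, ub⟫ ≤ m := hub ub hubS
      nlinarith
    set lam := l - r⁻¹ • e with hlam
    have hlamx : lam = r⁻¹ • (x - ub) := by
      rw [hxub]
      conv_rhs => rw [smul_sub, smul_smul, inv_mul_cancel₀ hr.ne', one_smul]
    -- lam is a Fréchet normal at ub
    have hfre : lam ∈ frechetNormal S ub := by
      intro ε hε
      refine ⟨2 * r * ε, by positivity, fun y hy hyd => ?_⟩
      have hin : ⟪lam, y - ub⟫ = r⁻¹ * ⟪x - ub, y - ub⟫ := by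
        rw [hlamx, real_inner_smul_left]
      have h2 := h1 y hy
      have hyn : (0:ℝ) ≤ ‖y - ub‖ := norm_nonneg _
      rw [hin]
      have hri : r * r⁻¹ = 1 := mul_inv_cancel₀ hr.ne'
      have hri0 : 0 < r⁻¹ := inv_pos.mpr hr
      calc r⁻¹ * ⟪x - ub, y - ub⟫ ≤ r⁻¹ * (‖y - ub‖ ^ 2 / 2) := by
            exact mul_le_mul_of_nonneg_left h2 hri0.le
        _ ≤ ε * ‖y - ub‖ := by nlinarith
    have hlim : lam ∈ limNormal S ub :=
      ⟨fun _ => ub, fun _ => lam, fun _ => hubS, tendsto_const_nhds,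
        tendsto_const_nhds, fun _ => hfre⟩
    -- lam is close to l
    have hdist : dist lam l < ε₀ := by
      rw [dist_eq_norm]
      have : lam - l = -(r⁻¹ • e) := by rw [hlam]; abel
      rw [this, norm_neg, norm_smul, Real.norm_eq_abs,
        abs_of_pos (inv_pos.mpr hr)]
      have hen : (0:ℝ) ≤ ‖e‖ := norm_nonneg _
      have h3 : ‖e‖ ^ 2 < (ε₀ * r) ^ 2 := by nlinarith
      have h4 : ‖e‖ < ε₀ * r := by nlinarith [mul_pos hε₀ hr, sq_nonneg (‖e‖ - ε₀ * r), sq_nonneg (‖e‖ + ε₀ * r)]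
      rw [inv_mul_lt_iff₀ hr]  -- r⁻¹ * ‖e‖ < ε₀ ↔ ‖e‖ < r * ε₀ ? check
      linarith [h4]
    -- value estimate ⟪lam, ub⟫ ≤ b
    have hval : ⟪lam, ub⟫ ≤ b := by
      have hin : ⟪lam, ub⟫ = ⟪l, ub⟫ - r⁻¹ * ⟪e, ub⟫ := by
        rw [hlam, inner_sub_left, real_inner_smul_left]
      have hube : (ub : EuclideanSpace ℝ (Fin n)) = u₀ + e := by rw [he]; abel
      have hin2 : ⟪e, ub⟫ = ⟪e, u₀⟫ + ‖e‖ ^ 2 := by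
        rw [hube, inner_add_right, real_inner_self_eq_norm_sq]
      have hcs : |⟪e, u₀⟫| ≤ ‖e‖ * N := abs_real_inner_le_norm _ _
      have hubm : ⟪l, ub⟫ ≤ m := hub ub hubS
      have hen : (0:ℝ) ≤ ‖e‖ := norm_nonneg _
      -- ‖e‖ * N ≤ δ * r
      have hkey : ‖e‖ * N ≤ δ * r := by
        have hsq : (‖e‖ * N) ^ 2 ≤ (δ * r) ^ 2 := by nlinarith
        nlinarith [mul_nonneg hen hN0, mul_nonneg hδ.le hr.le]
      have hri0 : 0 < r⁻¹ := inv_pos.mpr hr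
      have hri : r * r⁻¹ = 1 := mul_inv_cancel₀ hr.ne'
      have h5 : r⁻¹ * (‖e‖ * N) ≤ δ := by
        have := mul_le_mul_of_nonneg_left hkey hri0.le
        calc r⁻¹ * (‖e‖ * N) ≤ r⁻¹ * (δ * r) := this
          _ = δ := by field_simp
      have h6 : -(r⁻¹ * ⟪e, u₀⟫) ≤ r⁻¹ * (‖e‖ * N) := by
        have := neg_abs_le (⟪e, u₀⟫ : ℝ)
        nlinarith [abs_nonneg (⟪e, u₀⟫ : ℝ)]
      have h7 : 0 ≤ r⁻¹ * ‖e‖ ^ 2 := by positivity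
      rw [hin, hin2]
      have : r⁻¹ * (⟪e, u₀⟫ + ‖e‖ ^ 2) = r⁻¹ * ⟪e, u₀⟫ + r⁻¹ * ‖e‖ ^ 2 := by ring
      rw [this]
      simp only [hδdef] at h5 ⊢
      linarith
    -- conclude
    refine ⟨lam, hball (Metric.mem_ball.mpr hdist), ?_⟩
    calc sInf ((fun u => ((⟪lam, u⟫ : ℝ) : EReal)) '' {u | lam ∈ limNormal S u})
        ≤ ((⟪lam, ub⟫ : ℝ) : EReal) := sInf_le ⟨ub, hlim, rfl⟩
      _ ≤ ((b : ℝ) : EReal) := by exact_mod_cast hval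
end

section
/- For every nonempty closed convex set S ⊆ R^n and every λ ∈ R^n, the lower generalized support function equals the support function: σ̂_S(λ) = σ_S(λ). -/
open Filter Topology Pointwise RealInnerProductSpace

section Helpers
variable {E : Type*} [NormedAddCommGroup E] [InnerProductSpace ℝ E]

lemma frechet_of_convexNormal {S : Set E} {x v : E}
    (h : ∀ y ∈ S, ⟪v, y - x⟫ ≤ 0) : v ∈ frechetNormal S x := by
  intro ε hε
  exact ⟨1, one_pos, fun y hy _ => (h y hy).trans (by positivity)⟩

lemma limNormal_of_convexNormal {S : Set E} {x v : E} (hx : x ∈ S)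
    (h : ∀ y ∈ S, ⟪v, y - x⟫ ≤ 0) : v ∈ limNormal S x :=
  ⟨fun _ => x, fun _ => v, fun _ => hx, tendsto_const_nhds, tendsto_const_nhds,
    fun _ => frechet_of_convexNormal h⟩

lemma frechetNormal_convex {S : Set E} (hconv : Convex ℝ S) {x v : E} (hx : x ∈ S)
    (hv : v ∈ frechetNormal S x) : ∀ y ∈ S, ⟪v, y - x⟫ ≤ 0 := by
  intro y hy
  rcases eq_or_ne y x with rfl | hyx
  · simp
  have hN : 0 < ‖y - x‖ := by
    rw [norm_pos_iff, sub_ne_zero]; exact hyx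
  have key : ∀ ε > (0:ℝ), ⟪v, y - x⟫ ≤ ε * ‖y - x‖ := by
    intro ε hε
    obtain ⟨δ, hδ, hδ'⟩ := hv ε hε
    set t : ℝ := min 1 (δ / ‖y - x‖) with hts
    have ht0 : 0 < t := lt_min one_pos (by positivity)
    have ht1 : t ≤ 1 := min_le_left _ _
    have hz : x + t • (y - x) ∈ S := by
      have h2 := hconv hx hy (by linarith : (0:ℝ) ≤ 1 - t) ht0.le (by ring)
      have h3 : (1 - t) • x + t • y = x + t • (y - x) := by
        rw [smul_sub, sub_smul, one_smul]; abel
      rwa [h3] at h2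
    have hzx : ‖(x + t • (y - x)) - x‖ ≤ δ := by
      rw [add_sub_cancel_left, norm_smul, Real.norm_eq_abs, abs_of_pos ht0]
      calc t * ‖y - x‖ ≤ (δ / ‖y - x‖) * ‖y - x‖ := by
            have := min_le_right 1 (δ / ‖y - x‖)
            nlinarith
        _ = δ := div_mul_cancel₀ _ hN.ne'
    have h4 := hδ' _ hz hzx
    rw [add_sub_cancel_left, real_inner_smul_right, norm_smul, Real.norm_eq_abs,
      abs_of_pos ht0] at h4
    nlinarith
  by_contra hc
  push_neg at hc
  have h5 := key (⟪v, y - x⟫ / (2 * ‖y - x‖)) (by positivity)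
  have h6 : ⟪v, y - x⟫ / (2 * ‖y - x‖) * ‖y - x‖ = ⟪v, y - x⟫ / 2 := by
    field_simp
  rw [h6] at h5
  linarith

lemma limNormal_convex {S : Set E} (hS : IsClosed S) (hconv : Convex ℝ S) {x v : E}
    (hv : v ∈ limNormal S x) : x ∈ S ∧ ∀ y ∈ S, ⟪v, y - x⟫ ≤ 0 := by
  obtain ⟨xk, vk, hmem, hxk, hvk, hfk⟩ := hv
  have hxS : x ∈ S := hS.mem_of_tendsto hxk (Eventually.of_forall hmem)
  refine ⟨hxS, fun y hy => ?_⟩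
  have hk : ∀ k, ⟪vk k, y - xk k⟫ ≤ 0 :=
    fun k => frechetNormal_convex hconv (hmem k) (hfk k) y hy
  have hcont : Tendsto (fun k => ⟪vk k, y - xk k⟫) atTop (𝓝 ⟪v, y - x⟫) :=
    hvk.inner (tendsto_const_nhds.sub hxk)
  exact le_of_tendsto hcont (Eventually.of_forall hk)

end Helpers


theorem stmt_12 {n : ℕ} (S : Set (EuclideanSpace ℝ (Fin n))) (hS : IsClosed S)
    (hconv : Convex ℝ S) (hne : S.Nonempty) (l : EuclideanSpace ℝ (Fin n)) :
    sigmaHat S l = suppFn S l := by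
  classical
  obtain ⟨u₀, hu₀⟩ := hne
  set f : EuclideanSpace ℝ (Fin n) → EReal :=
    fun l' => sInf ((fun u => ((⟪l', u⟫ : ℝ) : EReal)) '' {u | l' ∈ limNormal S u}) with hf
  have hlower : ∀ (l' : EuclideanSpace ℝ (Fin n)) u, u ∈ S → ((⟪l', u⟫:ℝ) : EReal) ≤ f l' := by
    intro l' u hu
    refine le_sInf ?_
    rintro b ⟨u', hu', rfl⟩
    obtain ⟨hu'S, hN⟩ := limNormal_convex hS hconv hu'
    have h1 := hN u hu
    rw [inner_sub_right] at h1
    exact EReal.coe_le_coe_iff.mpr (by linarith)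
  have hge : suppFn S l ≤ liminf f (𝓝 l) := by
    rw [suppFn]
    refine sSup_le ?_
    rintro b ⟨u, hu, rfl⟩
    have hc1 : Tendsto (fun l' : EuclideanSpace ℝ (Fin n) => ⟪l', u⟫) (𝓝 l) (𝓝 ⟪l, u⟫) :=
      tendsto_id.inner tendsto_const_nhds
    have hcont : Tendsto (fun l' : EuclideanSpace ℝ (Fin n) => ((⟪l', u⟫:ℝ) : EReal)) (𝓝 l)
        (𝓝 ((⟪l, u⟫:ℝ):EReal)) := (continuous_coe_real_ereal.tendsto _).comp hc1
    show ((⟪l, u⟫:ℝ):EReal) ≤ liminf f (𝓝 l)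
    rw [← hcont.liminf_eq]
    exact liminf_le_liminf (Eventually.of_forall fun l' => hlower l' u hu)
  refine le_antisymm ?_ hge
  rcases eq_top_or_lt_top (suppFn S l) with htop | hlt
  · rw [htop]; exact le_top
  have hbot : (⊥:EReal) < suppFn S l :=
    lt_of_lt_of_le (EReal.bot_lt_coe _) (le_sSup ⟨u₀, hu₀, rfl⟩)
  set M : ℝ := (suppFn S l).toReal with hM
  have hMeq : ((M:ℝ):EReal) = suppFn S l := EReal.coe_toReal hlt.ne hbot.ne'
  have hMub : ∀ u ∈ S, ⟪l, u⟫ ≤ M := by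
    intro u hu
    have h1 : ((⟪l,u⟫:ℝ):EReal) ≤ ((M:ℝ):EReal) := by
      rw [hMeq]; exact le_sSup ⟨u, hu, rfl⟩
    exact EReal.coe_le_coe_iff.mp h1
  set C : ℝ := M - ⟪l, u₀⟫ with hC
  have hC0 : 0 ≤ C := sub_nonneg.mpr (hMub u₀ hu₀)
  set t : ℕ → ℝ := fun k => (k:ℝ)+1 with ht
  have ht0 : ∀ k, 0 < t k := fun k => by positivity
  have hproj : ∀ k : ℕ, ∃ p ∈ S, ∀ w ∈ S, ⟪(u₀ + t k • l) - p, w - p⟫ ≤ 0 := by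
    intro k
    obtain ⟨p, hpS, hpd⟩ := exists_norm_eq_iInf_of_complete_convex ⟨u₀, hu₀⟩
      hS.isComplete hconv (u₀ + t k • l)
    exact ⟨p, hpS, (norm_eq_iInf_iff_real_inner_le_zero hconv hpS).mp hpd⟩
  choose p hpS hpn using hproj
  set lam : ℕ → EuclideanSpace ℝ (Fin n) := fun k => l + (t k)⁻¹ • (u₀ - p k) with hlam
  have hlameq : ∀ k, lam k = (t k)⁻¹ • ((u₀ + t k • l) - p k) := by
    intro k
    have hne' : t k ≠ 0 := (ht0 k).ne'
    simp only [hlam]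
    match_scalars <;> field_simp
  have hlamN : ∀ k, ∀ y ∈ S, ⟪lam k, y - p k⟫ ≤ 0 := by
    intro k y hy
    rw [hlameq k, real_inner_smul_left]
    exact mul_nonpos_of_nonneg_of_nonpos (inv_nonneg.mpr (ht0 k).le) (hpn k y hy)
  have hd2 : ∀ k, ‖u₀ - p k‖^2 ≤ t k * C := by
    intro k
    have h1 := hpn k u₀ hu₀
    have he : (u₀ + t k • l) - p k = (u₀ - p k) + t k • l := by abel
    rw [he, inner_add_left, real_inner_smul_left, real_inner_self_eq_norm_sq] at h1
    have h3 : ⟪l, p k⟫ ≤ M := hMub _ (hpS k)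
    have h4 : ⟪l, u₀ - p k⟫ = ⟪l, u₀⟫ - ⟪l, p k⟫ := inner_sub_right l u₀ (p k)
    nlinarith [ht0 k]
  have hkey : ∀ k, ‖(t k)⁻¹ • (u₀ - p k)‖ ≤ Real.sqrt (C / t k) := by
    intro k
    have h1 : ‖u₀ - p k‖ ≤ Real.sqrt (t k * C) :=
      (Real.le_sqrt (norm_nonneg _) (by positivity)).mpr (hd2 k)
    have hst : Real.sqrt (t k) > 0 := Real.sqrt_pos.mpr (ht0 k)
    have h2 : Real.sqrt (t k * C) / t k = Real.sqrt (C / t k) := by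
      rw [Real.sqrt_mul (ht0 k).le, Real.sqrt_div hC0]
      rw [div_eq_div_iff (ht0 k).ne' hst.ne']
      linear_combination Real.sqrt C * Real.mul_self_sqrt (ht0 k).le
    rw [norm_smul, Real.norm_eq_abs, abs_of_pos (inv_pos.mpr (ht0 k))]
    rw [← h2, inv_mul_eq_div, div_le_div_iff_of_pos_right (ht0 k)]
    exact h1
  have hb : Tendsto (fun k => Real.sqrt (C / t k)) atTop (𝓝 0) := by
    have h1 : Tendsto t atTop atTop := by
      rw [ht]
      exact tendsto_atTop_add_const_right _ 1 tendsto_natCast_atTop_atTop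
    have h2 : Tendsto (fun k => C / t k) atTop (𝓝 0) := Tendsto.div_atTop tendsto_const_nhds h1
    have h3 := (Real.continuous_sqrt.tendsto 0).comp h2
    simpa [Function.comp_def] using h3
  have hlim : Tendsto lam atTop (𝓝 l) := by
    rw [tendsto_iff_norm_sub_tendsto_zero]
    refine squeeze_zero (fun k => norm_nonneg _) (fun k => ?_) hb
    rw [hlam]
    simpa [add_sub_cancel_left] using hkey k
  have hval : ∀ k, ⟪lam k, p k⟫ ≤ M + ‖u₀‖ * Real.sqrt (C / t k) := by
    intro k
    have h1 : ⟪lam k, p k⟫ = ⟪l, p k⟫ + (t k)⁻¹ * ⟪u₀ - p k, p k⟫ := by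
      rw [hlam, inner_add_left, real_inner_smul_left]
    have h2 : ⟪l, p k⟫ ≤ M := hMub _ (hpS k)
    have hd : ⟪u₀ - p k, p k⟫ ≤ ‖u₀ - p k‖ * ‖u₀‖ := by
      have he : ⟪u₀ - p k, p k⟫ = ⟪u₀ - p k, u₀⟫ - ‖u₀ - p k‖^2 := by
        rw [← real_inner_self_eq_norm_sq, ← inner_sub_right]
        congr 1
        abel
      nlinarith [real_inner_le_norm (u₀ - p k) u₀, sq_nonneg ‖u₀ - p k‖]
    have h3 : (t k)⁻¹ * ⟪u₀ - p k, p k⟫ ≤ ‖u₀‖ * Real.sqrt (C / t k) := by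
      calc (t k)⁻¹ * ⟪u₀ - p k, p k⟫ ≤ (t k)⁻¹ * (‖u₀ - p k‖ * ‖u₀‖) :=
            mul_le_mul_of_nonneg_left hd (inv_nonneg.mpr (ht0 k).le)
        _ = ‖(t k)⁻¹ • (u₀ - p k)‖ * ‖u₀‖ := by
            rw [norm_smul, Real.norm_eq_abs, abs_of_pos (inv_pos.mpr (ht0 k))]; ring
        _ ≤ Real.sqrt (C / t k) * ‖u₀‖ :=
            mul_le_mul_of_nonneg_right (hkey k) (norm_nonneg _)
        _ = ‖u₀‖ * Real.sqrt (C / t k) := mul_comm _ _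
    linarith
  have hfle : ∀ k, f (lam k) ≤ ((⟪lam k, p k⟫:ℝ):EReal) := by
    intro k
    exact sInf_le ⟨p k, limNormal_of_convexNormal (hpS k) (hlamN k), rfl⟩
  calc liminf f (𝓝 l) ≤ liminf (f ∘ lam) atTop := by
        have h := liminf_le_liminf_of_le (hlim : Filter.map lam atTop ≤ 𝓝 l)
          (u := f)
        rwa [← liminf_comp] at h
    _ ≤ liminf (fun k => ((M + ‖u₀‖ * Real.sqrt (C / t k) : ℝ) : EReal)) atTop := by
        refine liminf_le_liminf (Eventually.of_forall fun k => ?_)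
        exact (hfle k).trans (EReal.coe_le_coe_iff.mpr (hval k))
    _ = ((M:ℝ):EReal) := by
        apply Tendsto.liminf_eq
        have h1 : Tendsto (fun k => M + ‖u₀‖ * Real.sqrt (C / t k)) atTop (𝓝 (M + ‖u₀‖ * 0)) :=
          tendsto_const_nhds.add (tendsto_const_nhds.mul hb)
        have h2 := (continuous_coe_real_ereal.tendsto _).comp h1
        simpa [Function.comp_def] using h2
    _ = suppFn S l := hMeq
end
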